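/- arXiv:2306.03884 — 5 statements merged into one kernel-verified Lean document; each statement's English description precedes it below -/
import Mathlib

section
/- For every n ≥ 3, the path on n vertices with terminals s and t taken as the two endpoints of the path is an optimal (n,n-1)-graph: for every tree T on n vertices, every pair of distinct vertices s',t' of T, and every p ∈ (0,1), sRel(P_n, s, t; p) ≥ sRel(T, s', t'; p). -/
/-- A finite loopless multigraph: a finite vertex type `V`, a finite edge type `E`,
and an endpoint map assigning to each edge an unordered pair of distinct vertices. -/
structure Multigraph where
  V : Type
  E : Type
  [fintV : Fintype V]
  [fintE : Fintype E]
  [decV : DecidableEq V]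
  [decE : DecidableEq E]
  ends : E → Sym2 V
  loopless : ∀ e, ¬ (ends e).IsDiag

attribute [instance] Multigraph.fintV Multigraph.fintE Multigraph.decV Multigraph.decE

namespace Multigraph

/-- The simple graph on `G.V` underlying the spanning subgraph of `G` with edge set `E'`. -/
def subgraph (G : Multigraph) (E' : Finset G.E) : SimpleGraph G.V where
  Adj u v := u ≠ v ∧ ∃ e ∈ E', G.ends e = s(u, v)
  symm := by
    constructor
    rintro u v ⟨huv, e, he, hends⟩
    exact ⟨huv.symm, e, he, hends.trans (Sym2.eq_swap)⟩
  loopless := by constructor; rintro u ⟨h, -⟩; exact h rfl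

/-- The spanning subgraph of `G` with edge set `E'` has exactly two connected components,
one containing `s` and the other containing `t`. -/
def SplitState (G : Multigraph) (s t : G.V) (E' : Finset G.E) : Prop :=
  ¬ (G.subgraph E').Reachable s t ∧
    ∀ v : G.V, (G.subgraph E').Reachable v s ∨ (G.subgraph E').Reachable v t

open scoped Classical in
/-- The split reliability of `G` with terminals `s` and `t`, at edge probability `p`. -/
noncomputable def sRel (G : Multigraph) (s t : G.V) (p : ℝ) : ℝ :=
  ∑ E' : Finset G.E, if G.SplitState s t E' then
    p ^ E'.card * (1 - p) ^ (Fintype.card G.E - E'.card) else 0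

open scoped Classical in
/-- `N_i(G,s,t)`: the number of edge subsets of cardinality `i` whose spanning subgraph has
exactly two connected components, one containing `s` and the other containing `t`. -/
noncomputable def Nst (G : Multigraph) (s t : G.V) (i : ℕ) : ℕ :=
  (Finset.univ.filter fun E' : Finset G.E => E'.card = i ∧ G.SplitState s t E').card

/-- A multigraph is connected when its underlying simple graph is. -/
def Connected (G : Multigraph) : Prop := (G.subgraph Finset.univ).Connected

open scoped Classical in
/-- The all-terminal reliability of `G` at edge probability `p`. -/
noncomputable def Rel (G : Multigraph) (p : ℝ) : ℝ :=
  ∑ E' : Finset G.E, if (G.subgraph E').Connected then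
    p ^ E'.card * (1 - p) ^ (Fintype.card G.E - E'.card) else 0

/-- `G` together with terminals `s ≠ t` is an optimal `(n,m)`-graph for split reliability. -/
def IsOptimal (n m : ℕ) (G : Multigraph) (s t : G.V) : Prop :=
  G.Connected ∧ Fintype.card G.V = n ∧ Fintype.card G.E = m ∧ s ≠ t ∧
    ∀ (H : Multigraph) (s' t' : H.V), H.Connected → Fintype.card H.V = n →
      Fintype.card H.E = m → s' ≠ t' → ∀ p : ℝ, 0 < p → p < 1 →
        H.sRel s' t' p ≤ G.sRel s t p

/-- An isomorphism of multigraphs taking terminals `s,t` of `G` to terminals `u,v` of `H`. -/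
def IsoTerm (G H : Multigraph) (s t : G.V) (u v : H.V) : Prop :=
  ∃ (φ : G.V ≃ H.V) (ψ : G.E ≃ H.E),
    (∀ e, H.ends (ψ e) = (G.ends e).map φ) ∧ φ s = u ∧ φ t = v

end Multigraph

namespace Multigraph

/-- `Gnm n m k`: the multigraph obtained from a path `v_0, v_1, …, v_{n-1}` (terminals
`s = v_0`, `t = v_{n-1}`) by replacing the path edge from `v_k` to `v_{k+1}` by a bundle of
`m - n + 2` parallel edges (so that the graph has `m` edges in total when `m ≥ n - 1`). -/
def Gnm (n m k : ℕ) (hk : k < n - 1) : Multigraph where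
  V := Fin n
  E := Fin m
  ends e :=
    if h : e.val < n - 1 then
      s((⟨e.val, by omega⟩ : Fin n), (⟨e.val + 1, by omega⟩ : Fin n))
    else
      s((⟨k, by omega⟩ : Fin n), (⟨k + 1, by omega⟩ : Fin n))
  loopless e := by
    by_cases h : e.val < n - 1 <;>
      simp [h, Sym2.mk_isDiag_iff, Fin.ext_iff]

/-- The cycle on `n ≥ 2` vertices. -/
def cycleGraph (n : ℕ) (hn : 2 ≤ n) : Multigraph where
  V := Fin n
  E := Fin n
  ends e := s(e, (⟨(e.val + 1) % n, Nat.mod_lt _ (by omega)⟩ : Fin n))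
  loopless e := by
    simp only [Sym2.mk_isDiag_iff, Fin.ext_iff, Fin.val_mk]
    intro hc
    rcases Nat.lt_or_ge (e.val + 1) n with h' | h'
    · rw [Nat.mod_eq_of_lt h'] at hc; omega
    · have he : e.val + 1 = n := by have := e.isLt; omega
      rw [he, Nat.mod_self] at hc
      omega

/-- The multigraph obtained from `G` by adjoining a new vertex (`none`) joined by a single
new edge to the vertex `u` of `G`. -/
def addPendant (G : Multigraph) (u : G.V) : Multigraph where
  V := Option G.V
  E := Option G.E
  ends e := e.elim s(some u, none) (fun e' => (G.ends e').map some)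
  loopless e := by
    cases e with
    | none => simp [Sym2.mk_isDiag_iff]
    | some e' =>
        show ¬ ((G.ends e').map some).IsDiag
        rw [Sym2.isDiag_map (Option.some_injective _)]
        exact G.loopless e'

/-- The disjoint union of two multigraphs. -/
def disjSum (A B : Multigraph) : Multigraph where
  V := A.V ⊕ B.V
  E := A.E ⊕ B.E
  ends := Sum.elim (fun e => (A.ends e).map Sum.inl) (fun e => (B.ends e).map Sum.inr)
  loopless e := by
    cases e with
    | inl e =>
        show ¬ ((A.ends e).map Sum.inl).IsDiag
        rw [Sym2.isDiag_map Sum.inl_injective]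
        exact A.loopless e
    | inr e =>
        show ¬ ((B.ends e).map Sum.inr).IsDiag
        rw [Sym2.isDiag_map Sum.inr_injective]
        exact B.loopless e

/-- The multigraph on three vertices `0, 1, 2` with a bundle of `a` parallel edges between
`0` and `1` and a bundle of `b` parallel edges between `1` and `2`. -/
def doubleBundle (a b : ℕ) : Multigraph where
  V := Fin 3
  E := Fin (a + b)
  ends e := if e.val < a then s((0 : Fin 3), (1 : Fin 3)) else s((1 : Fin 3), (2 : Fin 3))
  loopless e := by
    by_cases h : e.val < a <;> simp [h, Sym2.mk_isDiag_iff]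

/-- The multigraph on three vertices `0, 1, 2` with bundles of `a`, `b`, `c` parallel edges
between `0,1`, between `1,2`, and between `2,0` respectively. -/
def tripleBundle (a b c : ℕ) : Multigraph where
  V := Fin 3
  E := Fin (a + b + c)
  ends e :=
    if e.val < a then s((0 : Fin 3), (1 : Fin 3))
    else if e.val < a + b then s((1 : Fin 3), (2 : Fin 3))
    else s((2 : Fin 3), (0 : Fin 3))
  loopless e := by
    by_cases h : e.val < a
    · simp [h, Sym2.mk_isDiag_iff]
    · by_cases h' : e.val < a + b <;> simp [h, h', Sym2.mk_isDiag_iff]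

/-- The multigraph obtained from a path `v_0, …, v_{n-1}` by replacing the path edge at
position `k₁` by a bundle of `2` parallel edges and the path edge at position `k₂` by a
bundle of `m - n + 1` parallel edges (for `m ≥ n`, `k₁ ≠ k₂`, the graph has `m` edges). -/
def Gnm2 (n m k₁ k₂ : ℕ) (hk₁ : k₁ < n - 1) (hk₂ : k₂ < n - 1) : Multigraph where
  V := Fin n
  E := Fin m
  ends e :=
    if h : e.val < n - 1 then
      s((⟨e.val, by omega⟩ : Fin n), (⟨e.val + 1, by omega⟩ : Fin n))
    else if e.val = n - 1 then
      s((⟨k₁, by omega⟩ : Fin n), (⟨k₁ + 1, by omega⟩ : Fin n))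
    else
      s((⟨k₂, by omega⟩ : Fin n), (⟨k₂ + 1, by omega⟩ : Fin n))
  loopless e := by
    by_cases h : e.val < n - 1
    · simp [h, Sym2.mk_isDiag_iff, Fin.ext_iff]
    · by_cases h' : e.val = n - 1 <;> simp [h, h', Sym2.mk_isDiag_iff, Fin.ext_iff]

/-- The simple graph on `n ≥ 4` vertices consisting of a path `s = v_0, …, v_{n-3} = t` of
length `n - 3` together with two further vertices `v_{n-2}, v_{n-1}` forming a triangle
with `t`. It has `n` vertices and `n` edges. -/
def triGraph (n : ℕ) (hn : 4 ≤ n) : Multigraph where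
  V := Fin n
  E := Fin n
  ends e :=
    if h : e.val < n - 3 then
      s((⟨e.val, by omega⟩ : Fin n), (⟨e.val + 1, by omega⟩ : Fin n))
    else if e.val = n - 3 then
      s((⟨n - 3, by omega⟩ : Fin n), (⟨n - 2, by omega⟩ : Fin n))
    else if e.val = n - 2 then
      s((⟨n - 2, by omega⟩ : Fin n), (⟨n - 1, by omega⟩ : Fin n))
    else
      s((⟨n - 1, by omega⟩ : Fin n), (⟨n - 3, by omega⟩ : Fin n))
  loopless e := by
    by_cases h : e.val < n - 3
    · simp [h, Sym2.mk_isDiag_iff, Fin.ext_iff]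
    · by_cases h' : e.val = n - 3
      · simp only [dif_neg h, if_pos h', Sym2.mk_isDiag_iff, Fin.mk.injEq]; omega
      · by_cases h'' : e.val = n - 2
        · simp only [dif_neg h, if_neg h', if_pos h'', Sym2.mk_isDiag_iff, Fin.mk.injEq]; omega
        · simp only [dif_neg h, if_neg h', if_neg h'', Sym2.mk_isDiag_iff, Fin.mk.injEq]; omega

end Multigraph


open SimpleGraph


lemma my_conn_card_le {V : Type} [Fintype V] [DecidableEq V] {G : SimpleGraph V}
    [Fintype G.edgeSet] (h : G.Connected) :
    Fintype.card V ≤ G.edgeFinset.card + 1 := by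
  classical
  have hne := h.nonempty
  inhabit V
  choose f hf using fun v => (h v default).exists_walk_length_eq_dist
  have key : ∀ v : V, v ≠ default → G.dist ((f v).getVert 1) default < G.dist v default := by
    intro v hv
    have hnn : ¬ (f v).Nil := Walk.not_nil_of_ne hv
    have h1 : (f v).tail.length + 1 = (f v).length := Walk.length_tail_add_one hnn
    have h2 : G.dist ((f v).getVert 1) default ≤ (f v).tail.length := dist_le _
    have h3 := hf v
    omega
  have hadj : ∀ v : V, v ≠ default → G.Adj v ((f v).getVert 1) := by
    intro v hv
    exact (f v).adj_snd (Walk.not_nil_of_ne hv)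
  have hcard : ({default} : Finset V)ᶜ.card ≤ G.edgeFinset.card := by
    apply Finset.card_le_card_of_injOn (fun v => s(v, (f v).getVert 1))
    · intro v hv
      simp only [Finset.mem_coe, Finset.mem_compl, Finset.mem_singleton] at hv ⊢
      rw [mem_edgeFinset, mem_edgeSet]
      exact hadj v hv
    · intro a ha b hb hab
      rw [Finset.mem_coe, Finset.mem_compl, Finset.mem_singleton] at ha hb
      beta_reduce at hab
      rw [Sym2.mk_eq_mk_iff (p := (a, (f a).getVert 1)) (q := (b, (f b).getVert 1))] at hab
      rcases hab with hab | hab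
      · exact (Prod.mk.injEq _ _ _ _ ▸ hab).1
      · simp only [Prod.swap_prod_mk, Prod.mk.injEq] at hab
        obtain ⟨h1, h2⟩ := hab
        have k1 := key a ha
        have k2 := key b hb
        rw [← h1] at k2
        rw [h2] at k1
        omega
  have : ({default} : Finset V)ᶜ.card = Fintype.card V - 1 := by
    rw [Finset.card_compl, Finset.card_singleton]
  have hp : 0 < Fintype.card V := Fintype.card_pos
  omega

lemma Gnm_path_ends (n : ℕ) (hn : 3 ≤ n) (e : Fin (n-1)) :
    (Multigraph.Gnm n (n-1) 0 (Nat.sub_pos_of_lt (lt_of_lt_of_le (by norm_num) hn))).ends e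
      = s((⟨e.val, by omega⟩ : Fin n), (⟨e.val + 1, by omega⟩ : Fin n)) := by
  have he : e.val < n - 1 := e.isLt
  simp only [Multigraph.Gnm, dif_pos he]

lemma path_reach (n : ℕ) (hn : 3 ≤ n) (E' : Finset (Fin (n-1))) (a : ℕ) :
    ∀ (d : ℕ) (hd : a + d < n),
    (∀ i : Fin (n-1), a ≤ i.val → i.val < a + d → i ∈ E') →
    ((Multigraph.Gnm n (n-1) 0 (Nat.sub_pos_of_lt (lt_of_lt_of_le (by norm_num) hn))).subgraph E').Reachable
      ⟨a, by omega⟩ ⟨a + d, hd⟩ := by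
  intro d
  induction d with
  | zero => intro hd _; exact Reachable.refl _
  | succ d ih =>
    intro hd hE
    have hd' : a + d < n := by omega
    have h1 : ((Multigraph.Gnm n (n-1) 0 (Nat.sub_pos_of_lt (lt_of_lt_of_le (by norm_num) hn))).subgraph E').Reachable
        ⟨a, by omega⟩ ⟨a + d, hd'⟩ :=
      ih hd' (fun i h1 h2 => hE i h1 (by omega))
    refine h1.trans (Adj.reachable ?_)
    have hlt : a + d < n - 1 := by omega
    refine ⟨by intro hco; have hco' : a + d = a + (d + 1) := congrArg Fin.val hco; omega, ⟨a + d, hlt⟩, hE ⟨a + d, hlt⟩ (by simp) (by simp), ?_⟩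
    exact Gnm_path_ends n hn ⟨a + d, hlt⟩


lemma path_cut (n : ℕ) (hn : 3 ≤ n) (E' : Finset (Fin (n-1))) (j : ℕ) (hj : j < n - 1)
    (hjE : (⟨j, hj⟩ : Fin (n-1)) ∉ E') {u v : Fin n}
    (w : ((Multigraph.Gnm n (n-1) 0 (Nat.sub_pos_of_lt (lt_of_lt_of_le (by norm_num) hn))).subgraph E').Walk u v) :
    (u.val ≤ j ↔ v.val ≤ j) := by
  induction w with
  | nil => exact Iff.rfl
  | @cons x y z hadj q ih =>
    obtain ⟨hne, e, heE, hends⟩ := hadj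
    replace hends : s((⟨e.val, by have := e.isLt; omega⟩ : Fin n), (⟨e.val + 1, by have := e.isLt; omega⟩ : Fin n)) = s(x, y) :=
      (Gnm_path_ends n hn e).symm.trans hends
    have hej : e.val ≠ j := by
      intro hh
      apply hjE
      have : (⟨j, hj⟩ : Fin (n-1)) = e := Fin.ext hh.symm
      rwa [this]
    refine Iff.trans ?_ ih
    rw [Sym2.eq_iff] at hends
    have hv : (x.val = e.val ∧ y.val = e.val + 1) ∨ (y.val = e.val ∧ x.val = e.val + 1) := by
      rcases hends with ⟨h1, h2⟩ | ⟨h1, h2⟩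
      · exact Or.inl ⟨(congrArg Fin.val h1).symm, (congrArg Fin.val h2).symm⟩
      · exact Or.inr ⟨(congrArg Fin.val h1).symm, (congrArg Fin.val h2).symm⟩
    rcases hv with ⟨h1, h2⟩ | ⟨h1, h2⟩ <;> constructor <;> intro <;> omega

lemma path_splitstate (n : ℕ) (hn : 3 ≤ n) (e : Fin (n-1)) :
    (Multigraph.Gnm n (n-1) 0 (Nat.sub_pos_of_lt (lt_of_lt_of_le (by norm_num) hn))).SplitState ⟨0, lt_of_lt_of_le (by norm_num) hn⟩ ⟨n-1, Nat.sub_lt (lt_of_lt_of_le (by norm_num) hn) one_pos⟩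
      (Finset.univ.erase e) := by
  constructor
  · intro hr
    obtain ⟨w⟩ := hr
    have hcut := path_cut n hn _ e.val e.isLt (by exact fun h => (Finset.mem_erase.mp h).1 rfl) w
    have h1 : n - 1 ≤ e.val := hcut.mp (Nat.zero_le _)
    have h2 := e.isLt
    omega
  · intro v
    by_cases hv : v.val ≤ e.val
    · left
      have h := path_reach n hn (Finset.univ.erase e) 0 v.val (by omega)
        (fun i h1 h2 => Finset.mem_erase.mpr
          ⟨by intro hc; rw [hc] at h2; omega, Finset.mem_univ _⟩)
      have hveq : v = (⟨0 + v.val, by omega⟩ : Fin n) :=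
        Fin.ext (show v.val = 0 + v.val by omega)
      rw [hveq]
      exact h.symm
    · right
      have h := path_reach n hn (Finset.univ.erase e) v.val (n-1-v.val) (by omega)
        (fun i h1 h2 => Finset.mem_erase.mpr
          ⟨by intro hc; rw [hc] at h1; omega, Finset.mem_univ _⟩)
      have h1 : v = (⟨v.val, by omega⟩ : Fin n) := Fin.ext rfl
      have h2 : (⟨n-1, Nat.sub_lt (lt_of_lt_of_le (by norm_num) hn) one_pos⟩ : Fin n) = (⟨v.val + (n-1-v.val), by omega⟩ : Fin n) :=
        Fin.ext (show n - 1 = v.val + (n-1-v.val) by omega)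
      rw [h1, h2]
      exact h

lemma path_connected (n : ℕ) (hn : 3 ≤ n) :
    (Multigraph.Gnm n (n-1) 0 (Nat.sub_pos_of_lt (lt_of_lt_of_le (by norm_num) hn))).Connected := by
  rw [Multigraph.Connected, SimpleGraph.connected_iff]
  refine ⟨fun u v => ?_, ⟨⟨0, lt_of_lt_of_le (by norm_num) hn⟩⟩⟩
  have hu := path_reach n hn Finset.univ 0 u.val (by omega) (fun i _ _ => Finset.mem_univ _)
  have hv := path_reach n hn Finset.univ 0 v.val (by omega) (fun i _ _ => Finset.mem_univ _)
  have hueq : u = (⟨0 + u.val, by omega⟩ : Fin n) :=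
    Fin.ext (show u.val = 0 + u.val by omega)
  have hveq : v = (⟨0 + v.val, by omega⟩ : Fin n) :=
    Fin.ext (show v.val = 0 + v.val by omega)
  rw [hueq, hveq]
  exact hu.symm.trans hv



set_option maxHeartbeats 2000000 in
lemma path_sRel_ge (n : ℕ) (hn : 3 ≤ n) (p : ℝ) (hp0 : 0 < p) (hp1 : p < 1) :
    ((n:ℝ) - 1) * (p ^ (n-2) * (1-p)) ≤
      (Multigraph.Gnm n (n-1) 0 (Nat.sub_pos_of_lt (lt_of_lt_of_le (by norm_num) hn))).sRel ⟨0, lt_of_lt_of_le (by norm_num) hn⟩ ⟨n-1, Nat.sub_lt (lt_of_lt_of_le (by norm_num) hn) one_pos⟩ p := by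
  classical
  have h1p : (0:ℝ) ≤ 1 - p := by linarith
  have hc0 : (0:ℝ) ≤ p ^ (n-2) * (1-p) := mul_nonneg (pow_nonneg hp0.le _) h1p
  have hcE : Fintype.card (Multigraph.Gnm n (n-1) 0 (Nat.sub_pos_of_lt (lt_of_lt_of_le (by norm_num) hn) : 0 < n - 1)).E = n - 1 :=
    Fintype.card_fin _
  have herase_inj : Function.Injective (fun e : Fin (n-1) => (Finset.univ.erase e)) := by
    intro a b hab
    by_contra hne
    have hab' : Finset.univ.erase a = Finset.univ.erase b := hab
    have ha : a ∈ Finset.univ.erase b := Finset.mem_erase.mpr ⟨hne, Finset.mem_univ _⟩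
    rw [← hab'] at ha
    exact (Finset.mem_erase.mp ha).1 rfl
  set S : Finset (Finset (Fin (n-1))) :=
    Finset.univ.image (fun e : Fin (n-1) => (Finset.univ.erase e)) with hS
  have hScard : S.card = n - 1 := by
    rw [hS, Finset.card_image_of_injective _ herase_inj, Finset.card_univ, Fintype.card_fin]
  unfold Multigraph.sRel
  have hstep : ∀ E' : Finset (Fin (n-1)), E' ∈ (Finset.univ : Finset (Finset (Fin (n-1)))) →
      (if E' ∈ S then p ^ (n-2) * (1-p) else 0) ≤
      (if (Multigraph.Gnm n (n-1) 0 (Nat.sub_pos_of_lt (lt_of_lt_of_le (by norm_num) hn) : 0 < n-1)).SplitState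
          ⟨0, lt_of_lt_of_le (by norm_num) hn⟩ ⟨n-1, Nat.sub_lt (lt_of_lt_of_le (by norm_num) hn) one_pos⟩ E' then
        p ^ E'.card * (1-p) ^
          (Fintype.card (Multigraph.Gnm n (n-1) 0 (Nat.sub_pos_of_lt (lt_of_lt_of_le (by norm_num) hn) : 0 < n-1)).E - E'.card) else 0) := by
    intro E' _
    by_cases hmem : E' ∈ S
    · rw [if_pos hmem]
      obtain ⟨e, -, rfl⟩ := Finset.mem_image.mp hmem
      split
      swap
      · exact absurd (path_splitstate n hn e) ‹_›
      show p ^ (n-2) * (1-p) ≤ p ^ (Finset.univ.erase e).card * (1-p) ^ (Fintype.card (Fin (n-1)) - (Finset.univ.erase e).card)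
      have hcd : (Finset.univ.erase e).card = n - 2 := by
        rw [Finset.card_erase_of_mem (Finset.mem_univ e), Finset.card_univ, Fintype.card_fin]
        omega
      rw [hcd, Fintype.card_fin]
      have h1 : n - 1 - (n - 2) = 1 := by omega
      rw [h1, pow_one]
    · rw [if_neg hmem]
      split
      · exact mul_nonneg (pow_nonneg hp0.le _) (pow_nonneg h1p _)
      · exact le_refl _
  refine le_trans ?_ (Finset.sum_le_sum hstep)
  show ((n:ℝ) - 1) * (p ^ (n-2) * (1-p)) ≤ ∑ i : Finset (Fin (n-1)), if i ∈ S then p ^ (n-2) * (1-p) else 0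
  rw [Finset.sum_ite_mem, Finset.univ_inter, Finset.sum_const, hScard, nsmul_eq_mul]
  have : ((n - 1 : ℕ) : ℝ) = (n:ℝ) - 1 := by
    have : (1:ℕ) ≤ n := by omega
    push_cast [this]
    ring
  rw [this]

set_option maxHeartbeats 2000000 in
lemma tree_sRel_le (n : ℕ) (hn : 3 ≤ n) (H : Multigraph) (s' t' : H.V)
    (hconn : H.Connected) (hV : Fintype.card H.V = n) (hE : Fintype.card H.E = n - 1)
    (hst : s' ≠ t') (p : ℝ) (hp0 : 0 < p) (hp1 : p < 1) :
    H.sRel s' t' p ≤ ((n:ℝ) - 1) * (p ^ (n-2) * (1-p)) := by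
  classical
  have h1p : (0:ℝ) ≤ 1 - p := by linarith
  have hc0 : (0:ℝ) ≤ p ^ (n-2) * (1-p) := mul_nonneg (pow_nonneg hp0.le _) h1p
  have hcard : ∀ E' : Finset H.E, H.SplitState s' t' E' → E'.card = n - 2 := by
    intro E' hsp
    have hupper : E'.card ≤ n - 2 := by
      have hne : E' ≠ Finset.univ := by
        intro h
        apply hsp.1
        have hc := hconn
        rw [Multigraph.Connected] at hc
        rw [h]
        exact hc.preconnected s' t'
      have hlt : E'.card < Finset.univ.card :=
        Finset.card_lt_card (Finset.ssubset_univ_iff.mpr hne)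
      rw [Finset.card_univ, hE] at hlt
      omega
    have hlower : n ≤ E'.card + 2 := by
      set K := H.subgraph E' ⊔ SimpleGraph.fromEdgeSet {s(s', t')} with hK
      haveI : Fintype ↑K.edgeSet := Fintype.ofFinite _
      have hKconn : K.Connected := by
        rw [SimpleGraph.connected_iff]
        constructor
        · have hreach : ∀ w : H.V, K.Reachable w s' := by
            intro w
            rcases hsp.2 w with h | h
            · exact h.mono le_sup_left
            · refine (h.mono le_sup_left).trans (SimpleGraph.Adj.reachable ?_)
              exact ((SimpleGraph.sup_adj _ _ _ _).mpr
                (Or.inr ((SimpleGraph.fromEdgeSet_adj _).mpr ⟨by simp, hst⟩))).symm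
          exact fun u v => (hreach u).trans (hreach v).symm
        · rw [← Fintype.card_pos_iff, hV]; omega
      have hedge : K.edgeFinset ⊆ (E'.image H.ends) ∪ {s(s', t')} := by
        intro x hx
        rw [SimpleGraph.mem_edgeFinset, hK, SimpleGraph.edgeSet_sup] at hx
        rcases hx with hx | hx
        · induction x using Sym2.ind with
          | _ a b =>
            rw [SimpleGraph.mem_edgeSet] at hx
            obtain ⟨hne2, e, he, hends⟩ := hx
            exact Finset.mem_union_left _ (Finset.mem_image.mpr ⟨e, he, hends⟩)
        · rw [SimpleGraph.edgeSet_fromEdgeSet] at hx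
          obtain ⟨hx1, -⟩ := hx
          exact Finset.mem_union_right _ (by simpa using hx1)
      have hcardedge : K.edgeFinset.card ≤ E'.card + 1 := by
        have h1 := Finset.card_le_card hedge
        have h2 := Finset.card_union_le (E'.image H.ends) ({s(s', t')} : Finset (Sym2 H.V))
        have h3 := Finset.card_image_le (f := H.ends) (s := E')
        simp only [Finset.card_singleton] at h2
        omega
      have hfin := my_conn_card_le hKconn
      rw [hV] at hfin
      omega
    omega
  unfold Multigraph.sRel
  have hstep : ∀ E' : Finset H.E, E' ∈ (Finset.univ : Finset (Finset H.E)) →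
      (if H.SplitState s' t' E' then
        p ^ E'.card * (1-p) ^ (Fintype.card H.E - E'.card) else 0) ≤
      (if E'.card = n - 2 then p ^ (n-2) * (1-p) else 0) := by
    intro E' _
    by_cases hsp : H.SplitState s' t' E'
    · rw [if_pos hsp]
      have hc := hcard E' hsp
      rw [hc, hE, if_pos rfl]
      have h1 : n - 1 - (n - 2) = 1 := by omega
      rw [h1, pow_one]
    · rw [if_neg hsp]
      split
      · exact hc0
      · exact le_refl _
  refine le_trans (Finset.sum_le_sum hstep) ?_
  rw [← Finset.sum_filter, Finset.sum_const, nsmul_eq_mul]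
  have hsub : (Finset.univ.filter (fun E' : Finset H.E => E'.card = n - 2)) ⊆
      Finset.univ.powersetCard (n-2) := by
    intro E' hE'
    rw [Finset.mem_filter] at hE'
    exact Finset.mem_powersetCard_univ.mpr hE'.2
  have hcle : (Finset.univ.filter (fun E' : Finset H.E => E'.card = n - 2)).card ≤ n - 1 := by
    have := Finset.card_le_card hsub
    rw [Finset.card_powersetCard, Finset.card_univ, hE] at this
    have hch : (n-1).choose (n-2) = n - 1 := by
      have h2 : n - 2 = (n-1) - 1 := by omega
      rw [h2, Nat.choose_symm (by omega), Nat.choose_one_right]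
    omega
  have hcast : ((Finset.univ.filter (fun E' : Finset H.E => E'.card = n - 2)).card : ℝ)
      ≤ (n:ℝ) - 1 := by
    have h1 : ((n - 1 : ℕ) : ℝ) = (n:ℝ) - 1 := by
      have : (1:ℕ) ≤ n := by omega
      push_cast [this]
      ring
    rw [← h1]
    exact_mod_cast hcle
  exact mul_le_mul_of_nonneg_right hcast hc0


set_option maxHeartbeats 2000000

/-- For every `n ≥ 3`, the path on `n` vertices with terminals the two
endpoints of the path is an optimal `(n,n-1)`-graph: in particular its split reliability is
at least that of any tree (= connected `(n,n-1)`-graph) with any terminals, for all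
`p ∈ (0,1)`. -/
theorem path_isOptimal (n : ℕ) (hn : 3 ≤ n) :
    Multigraph.IsOptimal n (n - 1) (Multigraph.Gnm n (n - 1) 0 (by omega))
      (⟨0, by omega⟩ : Fin n) (⟨n - 1, by omega⟩ : Fin n) := by
  refine ⟨path_connected n hn, Fintype.card_fin n, Fintype.card_fin (n-1), ?_, ?_⟩
  · intro h
    have h2 : (0:ℕ) = n - 1 := congrArg Fin.val h
    omega
  · intro H s' t' hconn hV hE hst p hp0 hp1
    exact le_trans (tree_sRel_le n hn H s' t' hconn hV hE hst p hp0 hp1)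
      (path_sRel_ge n hn p hp0 hp1)
end

section
/- For every m ≥ 2 there is an optimal (3,m)-graph; specifically, the multigraph G_{3,m} consisting of a path s, v, t in which one of the two path edges is replaced by a bundle of m-1 parallel edges, with terminals s and t, satisfies sRel(G_{3,m},s,t;p) ≥ sRel(H,s',t';p) for every connected finite loopless multigraph H with 3 vertices and m edges, every pair of distinct terminals s',t' of H, and every p ∈ (0,1). -/
namespace Multigraph

private lemma fin_mk_ne {n a b : ℕ} (ha : a < n) (hb : b < n) (hab : a ≠ b) :
    (⟨a, ha⟩ : Fin n) ≠ ⟨b, hb⟩ := fun h => hab (congrArg Fin.val h)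

private lemma reach_eq_of_isolated {V : Type} {G' : SimpleGraph V} {s v : V}
    (h : ∀ u, ¬ G'.Adj s u) (hr : G'.Reachable s v) : v = s := by
  obtain ⟨w⟩ := hr
  cases w with
  | nil => rfl
  | cons h' p => exact absurd h' (h _)

private lemma ends_tri (H : Multigraph) (s t w : H.V)
    (hcov : ∀ v : H.V, v = s ∨ v = t ∨ v = w) (e : H.E) :
    H.ends e = s(s, t) ∨ H.ends e = s(s, w) ∨ H.ends e = s(t, w) := by
  have hl := H.loopless e
  generalize hz : H.ends e = z at *
  induction z using Sym2.ind with
  | _ u v =>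
    rw [Sym2.mk_isDiag_iff] at hl
    rcases hcov u with rfl | rfl | rfl <;> rcases hcov v with rfl | rfl | rfl <;>
      simp_all [Sym2.eq_swap]

private lemma splitState_iff (H : Multigraph) (s t w : H.V)
    (hst : s ≠ t) (hsw : s ≠ w) (htw : t ≠ w)
    (hcov : ∀ v : H.V, v = s ∨ v = t ∨ v = w) (E' : Finset H.E) :
    H.SplitState s t E' ↔
      (E'.Nonempty ∧ ∀ e ∈ E', H.ends e = s(t, w)) ∨
      (E'.Nonempty ∧ ∀ e ∈ E', H.ends e = s(s, w)) := by
  constructor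
  · rintro ⟨hnr, hcover⟩
    have hne : E'.Nonempty := by
      rcases Finset.eq_empty_or_nonempty E' with rfl | h
      · exfalso
        have hiso : ∀ x u : H.V, ¬ (H.subgraph (∅ : Finset H.E)).Adj x u := by
          rintro x u ⟨-, e, he, -⟩
          simp at he
        rcases hcover w with hws | hwt
        · exact hsw (reach_eq_of_isolated (hiso w) hws)
        · exact htw (reach_eq_of_isolated (hiso w) hwt)
      · exact h
    have hnoC : ∀ e ∈ E', H.ends e ≠ s(s, t) := by
      intro e he hC
      exact hnr (SimpleGraph.Adj.reachable (show (H.subgraph E').Adj s t from ⟨hst, e, he, hC⟩))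
    have hAB : ∀ e ∈ E', H.ends e = s(s, w) ∨ H.ends e = s(t, w) := by
      intro e he
      rcases ends_tri H s t w hcov e with h1 | h2 | h3
      · exact absurd h1 (hnoC e he)
      · exact Or.inl h2
      · exact Or.inr h3
    have hmix : ¬ ((∃ e ∈ E', H.ends e = s(s, w)) ∧ ∃ e ∈ E', H.ends e = s(t, w)) := by
      rintro ⟨⟨e, he, hA⟩, ⟨f, hf, hB⟩⟩
      exact hnr ((SimpleGraph.Adj.reachable
          (show (H.subgraph E').Adj s w from ⟨hsw, e, he, hA⟩)).trans
        (SimpleGraph.Adj.reachable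
          (show (H.subgraph E').Adj t w from ⟨htw, f, hf, hB⟩)).symm)
    obtain ⟨e0, he0⟩ := hne
    rcases hAB e0 he0 with hA0 | hB0
    · right
      refine ⟨⟨e0, he0⟩, fun f hf => ?_⟩
      rcases hAB f hf with h | h
      · exact h
      · exact absurd ⟨⟨e0, he0, hA0⟩, ⟨f, hf, h⟩⟩ hmix
    · left
      refine ⟨⟨e0, he0⟩, fun f hf => ?_⟩
      rcases hAB f hf with h | h
      · exact absurd ⟨⟨f, hf, h⟩, ⟨e0, he0, hB0⟩⟩ hmix
      · exact h
  · rintro (⟨⟨e0, he0⟩, hall⟩ | ⟨⟨e0, he0⟩, hall⟩)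
    · have hiso : ∀ u, ¬ (H.subgraph E').Adj s u := by
        rintro u ⟨-, e, he, hends⟩
        rw [hall e he] at hends
        rcases Sym2.eq_iff.mp hends with ⟨h1, h2⟩ | ⟨h1, h2⟩ <;> simp_all
      refine ⟨fun hr => hst (reach_eq_of_isolated hiso hr).symm, ?_⟩
      intro v
      rcases hcov v with rfl | rfl | rfl
      · exact Or.inl (SimpleGraph.Reachable.refl _)
      · exact Or.inr (SimpleGraph.Reachable.refl _)
      · exact Or.inr (SimpleGraph.Adj.reachable
          ⟨Ne.symm htw, e0, he0, (hall e0 he0).trans Sym2.eq_swap⟩)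
    · have hiso : ∀ u, ¬ (H.subgraph E').Adj t u := by
        rintro u ⟨-, e, he, hends⟩
        rw [hall e he] at hends
        rcases Sym2.eq_iff.mp hends with ⟨h1, h2⟩ | ⟨h1, h2⟩ <;> simp_all
      refine ⟨fun hr => hst (reach_eq_of_isolated hiso hr.symm), ?_⟩
      intro v
      rcases hcov v with rfl | rfl | rfl
      · exact Or.inl (SimpleGraph.Reachable.refl _)
      · exact Or.inr (SimpleGraph.Reachable.refl _)
      · exact Or.inl (SimpleGraph.Adj.reachable
          ⟨Ne.symm hsw, e0, he0, (hall e0 he0).trans Sym2.eq_swap⟩)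

private lemma sum_powerset_pq {ι : Type} [DecidableEq ι] (p q : ℝ) (S : Finset ι) :
    ∑ T ∈ S.powerset, p ^ T.card * q ^ (S.card - T.card) = (p + q) ^ S.card := by
  induction S using Finset.induction_on with
  | empty => simp
  | @insert a S ha ih =>
    rw [Finset.sum_powerset_insert ha, Finset.card_insert_of_notMem ha]
    have h1 : ∑ T ∈ S.powerset, p ^ T.card * q ^ (S.card + 1 - T.card)
        = q * ∑ T ∈ S.powerset, p ^ T.card * q ^ (S.card - T.card) := by
      rw [Finset.mul_sum]
      refine Finset.sum_congr rfl fun T hT => ?_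
      have hc : T.card ≤ S.card := Finset.card_le_card (Finset.mem_powerset.mp hT)
      have he : S.card + 1 - T.card = (S.card - T.card) + 1 := by omega
      rw [he, pow_succ]; ring
    have h2 : ∑ T ∈ S.powerset, p ^ (insert a T).card * q ^ (S.card + 1 - (insert a T).card)
        = p * ∑ T ∈ S.powerset, p ^ T.card * q ^ (S.card - T.card) := by
      rw [Finset.mul_sum]
      refine Finset.sum_congr rfl fun T hT => ?_
      have hT' := Finset.mem_powerset.mp hT
      have haT : a ∉ T := fun h => ha (hT' h)
      have hc : T.card ≤ S.card := Finset.card_le_card hT'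
      rw [Finset.card_insert_of_notMem haT]
      have he : S.card + 1 - (T.card + 1) = S.card - T.card := by omega
      rw [he, pow_succ]; ring
    rw [h1, h2, ih, pow_succ]; ring

private lemma sRel_three (H : Multigraph) (s t w : H.V)
    (hst : s ≠ t) (hsw : s ≠ w) (htw : t ≠ w)
    (hcov : ∀ v : H.V, v = s ∨ v = t ∨ v = w) (p : ℝ) :
    H.sRel s t p =
      (1 - p) ^ (Fintype.card H.E - (Finset.univ.filter fun e => H.ends e = s(t, w)).card)
      + (1 - p) ^ (Fintype.card H.E - (Finset.univ.filter fun e => H.ends e = s(s, w)).card)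
      - 2 * (1 - p) ^ Fintype.card H.E := by
  classical
  set B := (Finset.univ.filter fun e => H.ends e = s(t, w)) with hBdef
  set A := (Finset.univ.filter fun e => H.ends e = s(s, w)) with hAdef
  have hBm : B.card ≤ Fintype.card H.E :=
    le_trans (Finset.card_le_card (Finset.filter_subset _ _)) (le_of_eq Finset.card_univ)
  have hAm : A.card ≤ Fintype.card H.E :=
    le_trans (Finset.card_le_card (Finset.filter_subset _ _)) (le_of_eq Finset.card_univ)
  have hiff : ∀ E' : Finset H.E,
      (if H.SplitState s t E' then p ^ E'.card * (1 - p) ^ (Fintype.card H.E - E'.card) else 0)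
      = (if (E'.Nonempty ∧ E' ⊆ B) ∨ (E'.Nonempty ∧ E' ⊆ A) then
          p ^ E'.card * (1 - p) ^ (Fintype.card H.E - E'.card) else 0) := by
    intro E'
    refine if_congr ?_ rfl rfl
    rw [splitState_iff H s t w hst hsw htw hcov E']
    constructor
    · rintro (⟨h1, h2⟩ | ⟨h1, h2⟩)
      · exact Or.inl ⟨h1, fun e he => Finset.mem_filter.mpr ⟨Finset.mem_univ _, h2 e he⟩⟩
      · exact Or.inr ⟨h1, fun e he => Finset.mem_filter.mpr ⟨Finset.mem_univ _, h2 e he⟩⟩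
    · rintro (⟨h1, h2⟩ | ⟨h1, h2⟩)
      · exact Or.inl ⟨h1, fun e he => (Finset.mem_filter.mp (h2 he)).2⟩
      · exact Or.inr ⟨h1, fun e he => (Finset.mem_filter.mp (h2 he)).2⟩
  have hsum : ∀ S : Finset H.E, S.card ≤ Fintype.card H.E →
      ∑ T ∈ S.powerset, p ^ T.card * (1 - p) ^ (Fintype.card H.E - T.card)
        = (1 - p) ^ (Fintype.card H.E - S.card) := by
    intro S hS
    have hcong : ∀ T ∈ S.powerset, p ^ T.card * (1 - p) ^ (Fintype.card H.E - T.card)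
        = (1 - p) ^ (Fintype.card H.E - S.card) * (p ^ T.card * (1 - p) ^ (S.card - T.card)) := by
      intro T hT
      have h1 : T.card ≤ S.card := Finset.card_le_card (Finset.mem_powerset.mp hT)
      have h2 : Fintype.card H.E - T.card = (Fintype.card H.E - S.card) + (S.card - T.card) := by
        omega
      rw [h2, pow_add]; ring
    rw [Finset.sum_congr rfl hcong, ← Finset.mul_sum, sum_powerset_pq]
    have hpq : p + (1 - p) = 1 := by ring
    rw [hpq, one_pow, mul_one]
  have hdisj : Disjoint (B.powerset.erase ∅) (A.powerset.erase ∅) := by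
    rw [Finset.disjoint_left]
    intro E' h1 h2
    obtain ⟨hne1, hsub1⟩ := Finset.mem_erase.mp h1
    obtain ⟨-, hsub2⟩ := Finset.mem_erase.mp h2
    obtain ⟨x, hx⟩ := Finset.nonempty_iff_ne_empty.mpr hne1
    have hxB := (Finset.mem_filter.mp ((Finset.mem_powerset.mp hsub1) hx)).2
    have hxA := (Finset.mem_filter.mp ((Finset.mem_powerset.mp hsub2) hx)).2
    rw [hxA] at hxB
    rcases Sym2.eq_iff.mp hxB with ⟨h1', h2'⟩ | ⟨h1', h2'⟩
    · exact hst h1'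
    · exact hsw h1'
  have hfilter : (Finset.univ.filter fun E' : Finset H.E =>
      (E'.Nonempty ∧ E' ⊆ B) ∨ (E'.Nonempty ∧ E' ⊆ A))
      = B.powerset.erase ∅ ∪ A.powerset.erase ∅ := by
    ext E'
    simp only [Finset.mem_filter, Finset.mem_univ, true_and, Finset.mem_union,
      Finset.mem_erase, Finset.mem_powerset, Finset.nonempty_iff_ne_empty]
  have step1 : H.sRel s t p = ∑ E' ∈ (Finset.univ.filter fun E' : Finset H.E =>
      (E'.Nonempty ∧ E' ⊆ B) ∨ (E'.Nonempty ∧ E' ⊆ A)),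
      p ^ E'.card * (1 - p) ^ (Fintype.card H.E - E'.card) := by
    unfold sRel
    rw [Finset.sum_filter]
    exact Finset.sum_congr rfl fun E' _ => hiff E'
  rw [step1, hfilter, Finset.sum_union hdisj,
    Finset.sum_erase_eq_sub (Finset.empty_mem_powerset B),
    Finset.sum_erase_eq_sub (Finset.empty_mem_powerset A),
    hsum B hBm, hsum A hAm]
  simp only [Finset.card_empty, pow_zero, one_mul, Nat.sub_zero]
  ring

private lemma sRel_three' (H : Multigraph) (s t w : H.V)
    (hst : s ≠ t) (hsw : s ≠ w) (htw : t ≠ w)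
    (hcov : ∀ v : H.V, v = s ∨ v = t ∨ v = w) (p : ℝ) (aa bb mm : ℕ)
    (hA : (Finset.univ.filter fun e => H.ends e = s(s, w)).card = aa)
    (hB : (Finset.univ.filter fun e => H.ends e = s(t, w)).card = bb)
    (hM : Fintype.card H.E = mm) :
    H.sRel s t p = (1 - p) ^ (mm - bb) + (1 - p) ^ (mm - aa) - 2 * (1 - p) ^ mm := by
  subst hA hB hM
  exact sRel_three H s t w hst hsw htw hcov p

private lemma key_pow_ineq {q : ℝ} (h0 : 0 ≤ q) (h1 : q ≤ 1) {m x : ℕ}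
    (hx1 : 1 ≤ x) (hxm : x ≤ m - 1) (hm : 2 ≤ m) :
    q ^ x + q ^ (m - x) ≤ q + q ^ (m - 1) := by
  obtain ⟨k, rfl⟩ : ∃ k, x = k + 1 := ⟨x - 1, by omega⟩
  have hkj : m - 1 = k + (m - (k + 1)) := by omega
  rw [hkj, pow_add q k (m - (k + 1)), pow_succ q k]
  have hu : q ^ k ≤ 1 := pow_le_one₀ h0 h1
  have hv : q ^ (m - (k + 1)) ≤ q := by
    calc q ^ (m - (k + 1)) ≤ q ^ 1 := pow_le_pow_of_le_one h0 h1 (by omega)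
    _ = q := pow_one q
  nlinarith [mul_nonneg (sub_nonneg.mpr hu) (sub_nonneg.mpr hv),
    pow_nonneg h0 k, pow_nonneg h0 (m - (k + 1))]

private lemma main_ineq {q : ℝ} (h0 : 0 ≤ q) (h1 : q ≤ 1) {m a b c : ℕ}
    (hm : 2 ≤ m) (habc : a + b + c = m) (hs : 1 ≤ a + c) (ht : 1 ≤ b + c)
    (hw : 1 ≤ a + b) :
    q ^ (m - b) + q ^ (m - a) ≤ q + q ^ (m - 1) := by
  have hx : m - b = a + c := by omega
  have hy : m - a = b + c := by omega
  rw [hx, hy]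
  by_cases hb : b = 0
  · have h2 : q ^ (a + c) ≤ q ^ (m - 1) := pow_le_pow_of_le_one h0 h1 (by omega)
    have h3 : q ^ (b + c) ≤ q ^ 1 := pow_le_pow_of_le_one h0 h1 (by omega)
    rw [pow_one] at h3
    linarith
  · by_cases ha : a = 0
    · have h2 : q ^ (b + c) ≤ q ^ (m - 1) := pow_le_pow_of_le_one h0 h1 (by omega)
      have h3 : q ^ (a + c) ≤ q ^ 1 := pow_le_pow_of_le_one h0 h1 (by omega)
      rw [pow_one] at h3
      linarith
    · have h4 : q ^ (b + c) ≤ q ^ (m - (a + c)) := pow_le_pow_of_le_one h0 h1 (by omega)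
      have h5 := key_pow_ineq h0 h1 (x := a + c) (by omega) (by omega) hm
      linarith

private lemma exists_incident (H : Multigraph) (hconn : H.Connected) {v u : H.V}
    (hvu : v ≠ u) : ∃ e x, x ≠ v ∧ H.ends e = s(v, x) := by
  have hr : (H.subgraph Finset.univ).Reachable v u := hconn.preconnected v u
  obtain ⟨wk⟩ := hr
  cases wk with
  | nil => exact absurd rfl hvu
  | cons h p =>
    obtain ⟨hne, e, -, hends⟩ := h
    exact ⟨e, _, Ne.symm hne, hends⟩

end Multigraph

/-- For every `m ≥ 2`, the graph `G_{3,m}` (a path `s, v, t` with one of the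
two path edges replaced by a bundle of `m-1` parallel edges), with terminals the two
endpoints, is an optimal `(3,m)`-graph. -/
theorem optimal_three (m : ℕ) (hm : 2 ≤ m) :
    Multigraph.IsOptimal 3 m (Multigraph.Gnm 3 m 1 (by omega))
      (⟨0, by omega⟩ : Fin 3) (⟨2, by omega⟩ : Fin 3) := by
  classical
  have h3 : (1:ℕ) < 3 - 1 := by omega
  have hGE : Fintype.card (Multigraph.Gnm 3 m 1 h3).E = m := Fintype.card_fin m
  -- explicit description of the edges of G
  have hendsG : ∀ e : Fin m, (Multigraph.Gnm 3 m 1 h3).ends e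
      = if e.val = 0 then s((⟨0, by omega⟩ : Fin 3), (⟨1, by omega⟩ : Fin 3))
        else s((⟨1, by omega⟩ : Fin 3), (⟨2, by omega⟩ : Fin 3)) := by
    intro e
    show (if h : e.val < 3 - 1 then
        s((⟨e.val, by omega⟩ : Fin 3), (⟨e.val + 1, by omega⟩ : Fin 3))
      else s((⟨1, by omega⟩ : Fin 3), (⟨1 + 1, by omega⟩ : Fin 3))) = _
    by_cases hc : e.val < 3 - 1
    · rw [dif_pos hc]
      by_cases h0 : e.val = 0
      · rw [if_pos h0]
        exact Sym2.eq_iff.mpr (Or.inl ⟨Fin.ext (by show e.val = 0; omega),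
          Fin.ext (by show e.val + 1 = 1; omega)⟩)
      · rw [if_neg h0]
        exact Sym2.eq_iff.mpr (Or.inl ⟨Fin.ext (by show e.val = 1; omega),
          Fin.ext (by show e.val + 1 = 2; omega)⟩)
    · rw [dif_neg hc, if_neg (by omega : ¬ e.val = 0)]
  have hadj01 : ((Multigraph.Gnm 3 m 1 h3).subgraph Finset.univ).Adj
      ⟨0, by omega⟩ ⟨1, by omega⟩ := by
    refine ⟨Multigraph.fin_mk_ne _ _ (by omega), ⟨0, by omega⟩, Finset.mem_univ _, ?_⟩
    rw [hendsG ⟨0, by omega⟩]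
    exact if_pos rfl
  have hadj12 : ((Multigraph.Gnm 3 m 1 h3).subgraph Finset.univ).Adj
      ⟨1, by omega⟩ ⟨2, by omega⟩ := by
    refine ⟨Multigraph.fin_mk_ne _ _ (by omega), ⟨1, by omega⟩, Finset.mem_univ _, ?_⟩
    rw [hendsG ⟨1, by omega⟩]
    exact if_neg (by simp)
  refine ⟨?_, Fintype.card_fin 3, Fintype.card_fin m, ?_, ?_⟩
  · -- connectivity of G
    show ((Multigraph.Gnm 3 m 1 h3).subgraph Finset.univ).Connected
    rw [SimpleGraph.connected_iff]
    refine ⟨?_, ⟨⟨0, by omega⟩⟩⟩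
    have key : ∀ u : Fin 3,
        ((Multigraph.Gnm 3 m 1 h3).subgraph Finset.univ).Reachable u ⟨1, by omega⟩ := by
      intro x
      obtain ⟨xv, hxv⟩ := x
      interval_cases xv
      · exact hadj01.reachable
      · exact SimpleGraph.Reachable.refl _
      · exact hadj12.symm.reachable
    intro u v
    exact (key u).trans (key v).symm
  · exact Multigraph.fin_mk_ne _ _ (by omega)
  · intro H s' t' hConn hV3 hEm hst' p hp0 hp1
    -- the third vertex of H
    obtain ⟨w, hws, hwt, hcov⟩ : ∃ w : H.V, w ≠ s' ∧ w ≠ t' ∧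
        ∀ v : H.V, v = s' ∨ v = t' ∨ v = w := by
      have h2 : ({s', t'} : Finset H.V).card = 2 := by
        rw [Finset.card_insert_of_notMem (by simpa using hst'), Finset.card_singleton]
      have hcard : ((Finset.univ : Finset H.V) \ {s', t'}).card = 1 := by
        rw [Finset.card_sdiff_of_subset (Finset.subset_univ _), Finset.card_univ, hV3, h2]
      obtain ⟨w, hw⟩ := Finset.card_eq_one.mp hcard
      have hwmem : w ∈ (Finset.univ : Finset H.V) \ ({s', t'} : Finset H.V) := by
        rw [hw]; exact Finset.mem_singleton_self w
      rw [Finset.mem_sdiff, Finset.mem_insert, Finset.mem_singleton] at hwmem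
      push_neg at hwmem
      refine ⟨w, hwmem.2.1, hwmem.2.2, fun v => ?_⟩
      by_cases h1 : v = s'
      · exact Or.inl h1
      by_cases h2' : v = t'
      · exact Or.inr (Or.inl h2')
      right; right
      have hv : v ∈ (Finset.univ : Finset H.V) \ ({s', t'} : Finset H.V) := by
        simp [h1, h2']
      rw [hw, Finset.mem_singleton] at hv
      exact hv
    -- edge classes of H
    have hdAB : Disjoint (Finset.univ.filter fun e => H.ends e = s(s', w))
        (Finset.univ.filter fun e => H.ends e = s(t', w)) := by
      rw [Finset.disjoint_left]
      intro e hA hB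
      have e1 := (Finset.mem_filter.mp hA).2
      have e2 := (Finset.mem_filter.mp hB).2
      rw [e2] at e1
      rcases Sym2.eq_iff.mp e1 with ⟨ha, -⟩ | ⟨ha, hb⟩
      · exact hst' ha.symm
      · exact hws hb
    have hdAC : Disjoint (Finset.univ.filter fun e => H.ends e = s(s', w))
        (Finset.univ.filter fun e => H.ends e = s(s', t')) := by
      rw [Finset.disjoint_left]
      intro e hA hC
      have e1 := (Finset.mem_filter.mp hA).2
      have e2 := (Finset.mem_filter.mp hC).2
      rw [e2] at e1
      rcases Sym2.eq_iff.mp e1 with ⟨-, hb⟩ | ⟨ha, hb⟩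
      · exact hwt hb.symm
      · exact hws ha.symm
    have hdBC : Disjoint (Finset.univ.filter fun e => H.ends e = s(t', w))
        (Finset.univ.filter fun e => H.ends e = s(s', t')) := by
      rw [Finset.disjoint_left]
      intro e hB hC
      have e1 := (Finset.mem_filter.mp hB).2
      have e2 := (Finset.mem_filter.mp hC).2
      rw [e2] at e1
      rcases Sym2.eq_iff.mp e1 with ⟨ha, hb⟩ | ⟨ha, hb⟩
      · exact hst' ha
      · exact hws ha.symm
    have hU : (((Finset.univ.filter fun e => H.ends e = s(s', w))
        ∪ (Finset.univ.filter fun e => H.ends e = s(t', w)))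
        ∪ (Finset.univ.filter fun e => H.ends e = s(s', t'))) = Finset.univ := by
      ext e
      simp only [Finset.mem_union, Finset.mem_filter, Finset.mem_univ, true_and, iff_true]
      rcases Multigraph.ends_tri H s' t' w hcov e with h | h | h
      · exact Or.inr h
      · exact Or.inl (Or.inl h)
      · exact Or.inl (Or.inr h)
    have habc : (Finset.univ.filter fun e => H.ends e = s(s', w)).card
        + (Finset.univ.filter fun e => H.ends e = s(t', w)).card
        + (Finset.univ.filter fun e => H.ends e = s(s', t')).card = m := by
      have hcardU := congrArg Finset.card hU
      rw [Finset.card_union_of_disjoint (Finset.disjoint_union_left.mpr ⟨hdAC, hdBC⟩),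
        Finset.card_union_of_disjoint hdAB, Finset.card_univ, hEm] at hcardU
      exact hcardU
    -- incidence facts from connectivity
    have hsinc : 1 ≤ (Finset.univ.filter fun e => H.ends e = s(s', w)).card
        + (Finset.univ.filter fun e => H.ends e = s(s', t')).card := by
      obtain ⟨e, x, hxs, hends⟩ := Multigraph.exists_incident H hConn hst'
      rcases hcov x with h | h | h
      · exact absurd h hxs
      · have hmem : e ∈ Finset.univ.filter fun e => H.ends e = s(s', t') :=
          Finset.mem_filter.mpr ⟨Finset.mem_univ _, hends.trans (by rw [h])⟩
        have := Finset.card_pos.mpr ⟨e, hmem⟩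
        omega
      · have hmem : e ∈ Finset.univ.filter fun e => H.ends e = s(s', w) :=
          Finset.mem_filter.mpr ⟨Finset.mem_univ _, hends.trans (by rw [h])⟩
        have := Finset.card_pos.mpr ⟨e, hmem⟩
        omega
    have htinc : 1 ≤ (Finset.univ.filter fun e => H.ends e = s(t', w)).card
        + (Finset.univ.filter fun e => H.ends e = s(s', t')).card := by
      obtain ⟨e, x, hxs, hends⟩ := Multigraph.exists_incident H hConn (Ne.symm hst')
      rcases hcov x with h | h | h
      · have hmem : e ∈ Finset.univ.filter fun e => H.ends e = s(s', t') :=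
          Finset.mem_filter.mpr ⟨Finset.mem_univ _,
            hends.trans (by rw [h]; exact Sym2.eq_swap)⟩
        have := Finset.card_pos.mpr ⟨e, hmem⟩
        omega
      · exact absurd h hxs
      · have hmem : e ∈ Finset.univ.filter fun e => H.ends e = s(t', w) :=
          Finset.mem_filter.mpr ⟨Finset.mem_univ _, hends.trans (by rw [h])⟩
        have := Finset.card_pos.mpr ⟨e, hmem⟩
        omega
    have hwinc : 1 ≤ (Finset.univ.filter fun e => H.ends e = s(s', w)).card
        + (Finset.univ.filter fun e => H.ends e = s(t', w)).card := by
      obtain ⟨e, x, hxs, hends⟩ := Multigraph.exists_incident H hConn hws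
      rcases hcov x with h | h | h
      · have hmem : e ∈ Finset.univ.filter fun e => H.ends e = s(s', w) :=
          Finset.mem_filter.mpr ⟨Finset.mem_univ _,
            hends.trans (by rw [h]; exact Sym2.eq_swap)⟩
        have := Finset.card_pos.mpr ⟨e, hmem⟩
        omega
      · have hmem : e ∈ Finset.univ.filter fun e => H.ends e = s(t', w) :=
          Finset.mem_filter.mpr ⟨Finset.mem_univ _,
            hends.trans (by rw [h]; exact Sym2.eq_swap)⟩
        have := Finset.card_pos.mpr ⟨e, hmem⟩
        omega
      · exact absurd h hxs
    -- cards for G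
    have hAG : (Finset.univ.filter fun e => (Multigraph.Gnm 3 m 1 h3).ends e
        = s((⟨0, by omega⟩ : Fin 3), (⟨1, by omega⟩ : Fin 3))).card = 1 := by
      have : (Finset.univ.filter fun e => (Multigraph.Gnm 3 m 1 h3).ends e
          = s((⟨0, by omega⟩ : Fin 3), (⟨1, by omega⟩ : Fin 3)))
          = {(id (α := (Multigraph.Gnm 3 m 1 h3).E) ⟨0, by omega⟩)} := by
        ext e
        simp only [Finset.mem_filter, Finset.mem_univ, true_and, Finset.mem_singleton,
          hendsG e]
        by_cases h0 : e.val = 0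
        · rw [if_pos h0]
          constructor
          · intro _
            exact Fin.ext (n := m) h0
          · intro _
            rfl
        · rw [if_neg h0]
          constructor
          · intro h
            rcases Sym2.eq_iff.mp h with ⟨h1, -⟩ | ⟨-, h2⟩
            · exact absurd h1 (Multigraph.fin_mk_ne _ _ (by omega))
            · exact absurd h2 (Multigraph.fin_mk_ne _ _ (by omega))
          · intro h
            exact absurd (congrArg (Fin.val (n := m)) h) h0
      rw [this, Finset.card_singleton]
    have hBG : (Finset.univ.filter fun e => (Multigraph.Gnm 3 m 1 h3).ends e
        = s((⟨2, by omega⟩ : Fin 3), (⟨1, by omega⟩ : Fin 3))).card = m - 1 := by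
      have heq : (Finset.univ.filter fun e => (Multigraph.Gnm 3 m 1 h3).ends e
          = s((⟨2, by omega⟩ : Fin 3), (⟨1, by omega⟩ : Fin 3)))
          = Finset.univ \ {(id (α := (Multigraph.Gnm 3 m 1 h3).E) ⟨0, by omega⟩)} := by
        ext e
        simp only [Finset.mem_filter, Finset.mem_univ, true_and, Finset.mem_sdiff,
          Finset.mem_singleton, hendsG e]
        by_cases h0 : e.val = 0
        · rw [if_pos h0]
          constructor
          · intro h
            rcases Sym2.eq_iff.mp h with ⟨h1, -⟩ | ⟨-, h2⟩
            · exact absurd h1 (Multigraph.fin_mk_ne _ _ (by omega))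
            · exact absurd h2 (Multigraph.fin_mk_ne _ _ (by omega))
          · intro h
            exact absurd (Fin.ext (n := m) h0) h
        · rw [if_neg h0]
          constructor
          · intro _
            exact fun he => h0 (congrArg (Fin.val (n := m)) he)
          · intro _
            exact Sym2.eq_iff.mpr (Or.inr ⟨rfl, rfl⟩)
      rw [heq, Finset.card_sdiff_of_subset (Finset.subset_univ _), Finset.card_singleton,
        Finset.card_univ, hGE]
    -- rewrite both split reliabilities
    have hcovG : ∀ v : Fin 3, v = (⟨0, by omega⟩ : Fin 3) ∨ v = (⟨2, by omega⟩ : Fin 3)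
        ∨ v = (⟨1, by omega⟩ : Fin 3) := by
      intro v
      obtain ⟨xv, hxv⟩ := v
      interval_cases xv
      · exact Or.inl rfl
      · exact Or.inr (Or.inr rfl)
      · exact Or.inr (Or.inl rfl)
    rw [Multigraph.sRel_three H s' t' w hst' (Ne.symm hws) (Ne.symm hwt) hcov p,
      Multigraph.sRel_three' (Multigraph.Gnm 3 m 1 h3) ⟨0, by omega⟩ ⟨2, by omega⟩
        ⟨1, by omega⟩ (Multigraph.fin_mk_ne _ _ (by omega))
        (Multigraph.fin_mk_ne _ _ (by omega))
        (Multigraph.fin_mk_ne _ _ (by omega)) hcovG p 1 (m - 1) m (by convert hAG <;> exact Iff.rfl)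
          (by convert hBG <;> exact Iff.rfl) hGE,
      hEm]
    have hone : m - (m - 1) = 1 := by omega
    rw [hone, pow_one]
    have hq0 : (0:ℝ) ≤ 1 - p := by linarith
    have hq1 : (1:ℝ) - p ≤ 1 := by linarith
    have hineq := Multigraph.main_ineq hq0 hq1 hm habc hsinc htinc hwinc
    linarith
end

section
/- If C_n is the cycle on n ≥ 3 vertices and s,t are distinct vertices of C_n at distance k (the shorter arc between s and t has k edges), then for all p ∈ [0,1], sRel(C_n,s,t;p) = k(n-k)·p^{n-2}(1-p)^2. -/
namespace SRelCycleAux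

/-- mod facts for arguments below `2*n`, omega-friendly. -/
theorem modspec {n : ℕ} (hn : 0 < n) (x : ℕ) (h : x < 2*n) :
    ∃ r, x % n = r ∧ r < n ∧ ((x < n ∧ r = x) ∨ (n ≤ x ∧ r = x - n)) := by
  rcases Nat.lt_or_ge x n with h'|h'
  · exact ⟨x, Nat.mod_eq_of_lt h', h', Or.inl ⟨h', rfl⟩⟩
  · refine ⟨x - n, ?_, by omega, Or.inr ⟨h', rfl⟩⟩
    rw [Nat.mod_eq_sub_mod h', Nat.mod_eq_of_lt (by omega)]

theorem addmod_inj {n : ℕ} (hn : 0 < n) {s x y : ℕ} (hs : s < n) (hx : x < n) (hy : y < n)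
    (h : (s+x) % n = (s+y) % n) : x = y := by
  obtain ⟨r1, e1, l1, d1⟩ := modspec hn (s+x) (by omega)
  obtain ⟨r2, e2, l2, d2⟩ := modspec hn (s+y) (by omega)
  omega

/-- vertex/edge of the cycle at absolute position `x`. -/
def vA (n : ℕ) (hn : 0 < n) (x : ℕ) : Fin n := ⟨x % n, Nat.mod_lt _ hn⟩

/-- position of `x` relative to base `u`. -/
def rho (n : ℕ) (u x : Fin n) : ℕ := (x.val + n - u.val) % n

theorem rho_lt {n : ℕ} (hn : 0 < n) (u x : Fin n) : rho n u x < n := Nat.mod_lt _ hn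

theorem vA_val {n : ℕ} (hn : 0 < n) (x : ℕ) : (vA n hn x).val = x % n := rfl

theorem vA_add_n {n : ℕ} (hn : 0 < n) (x : ℕ) : vA n hn (x + n) = vA n hn x := by
  simp [vA, Fin.ext_iff, Nat.add_mod_right]

theorem vA_vA {n : ℕ} (hn : 0 < n) (x y : ℕ) :
    vA n hn ((vA n hn x).val + y) = vA n hn (x + y) := by
  simp [vA, Fin.ext_iff, Nat.mod_add_mod]

theorem vA_spec {n : ℕ} (hn : 0 < n) (u x : Fin n) : vA n hn (u.val + rho n u x) = x := by
  have hu := u.isLt; have hx := x.isLt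
  unfold vA rho
  ext
  simp only
  obtain ⟨r1, e1, l1, d1⟩ := modspec hn (x.val + n - u.val) (by omega)
  rw [e1]
  obtain ⟨r2, e2, l2, d2⟩ := modspec hn (u.val + r1) (by omega)
  omega

theorem rho_vA {n : ℕ} (hn : 0 < n) (u : Fin n) (q : ℕ) (hq : q < n) :
    rho n u (vA n hn (u.val + q)) = q := by
  have hu := u.isLt
  unfold vA rho
  simp only
  obtain ⟨r1, e1, l1, d1⟩ := modspec hn (u.val + q) (by omega)
  rw [e1]
  obtain ⟨r2, e2, l2, d2⟩ := modspec hn (r1 + n - u.val) (by omega)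
  omega

theorem vA_inj {n : ℕ} (hn : 0 < n) {s : Fin n} {x y : ℕ} (hx : x < n) (hy : y < n)
    (h : vA n hn (s.val + x) = vA n hn (s.val + y)) : x = y := by
  have := s.isLt
  exact addmod_inj hn this hx hy (congrArg Fin.val h)

theorem rho_self {n : ℕ} (hn : 0 < n) (u : Fin n) : rho n u u = 0 := by
  unfold rho
  have h : u.val + n - u.val = n := by omega
  rw [h, Nat.mod_self]

theorem rho_eq_zero_iff {n : ℕ} (hn : 0 < n) (u x : Fin n) : rho n u x = 0 ↔ x = u := by
  constructor
  · intro h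
    have := vA_spec hn u x
    rw [h] at this
    rw [← this]
    simp [vA, Fin.ext_iff, Nat.mod_eq_of_lt u.isLt]
  · rintro rfl; exact rho_self hn x

theorem rho_symm {n : ℕ} (hn : 0 < n) (u v : Fin n) (huv : u ≠ v) :
    rho n u v + rho n v u = n := by
  have hu := u.isLt; have hv := v.isLt
  have hne : u.val ≠ v.val := fun h => huv (Fin.ext h)
  unfold rho
  obtain ⟨r1, e1, l1, d1⟩ := modspec hn (v.val + n - u.val) (by omega)
  obtain ⟨r2, e2, l2, d2⟩ := modspec hn (u.val + n - v.val) (by omega)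
  omega

/-- rho between two absolutely-positioned vertices. -/
theorem rho_vA_vA {n : ℕ} (hn : 0 < n) (s : Fin n) {a b : ℕ} (ha : a < n) (hb : b < n) :
    rho n (vA n hn (s.val + a)) (vA n hn (s.val + b)) = (b + n - a) % n := by
  have hs := s.isLt
  unfold rho vA
  simp only
  obtain ⟨r1, e1, l1, d1⟩ := modspec hn (s.val + a) (by omega)
  obtain ⟨r2, e2, l2, d2⟩ := modspec hn (s.val + b) (by omega)
  rw [e1, e2]
  obtain ⟨r3, e3, l3, d3⟩ := modspec hn (r2 + n - r1) (by omega)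
  obtain ⟨r4, e4, l4, d4⟩ := modspec hn (b + n - a) (by omega)
  omega

end SRelCycleAux
namespace SRelCycleAux

open Multigraph

theorem vA_self {n : ℕ} (hn : 0 < n) (u : Fin n) : vA n hn u.val = u :=
  Fin.ext (Nat.mod_eq_of_lt u.isLt)

theorem adj_iff {n : ℕ} (h2 : 2 ≤ n) (E' : Finset (Fin n)) (u v : Fin n) :
    ((cycleGraph n h2).subgraph E').Adj u v ↔
      ((u ∈ E' ∧ v.val = (u.val + 1) % n) ∨ (v ∈ E' ∧ u.val = (v.val + 1) % n)) := by
  have hn : 0 < n := by omega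
  have key : ∀ x : Fin n, x.val ≠ (x.val + 1) % n := by
    intro x
    have hx := x.isLt
    obtain ⟨r, e, l, d⟩ := modspec hn (x.val + 1) (by omega)
    omega
  constructor
  · rintro ⟨hne, e, he, hends⟩
    rw [show (cycleGraph n h2).ends e
        = s(e, (⟨(e.val+1) % n, Nat.mod_lt _ hn⟩ : Fin n)) from rfl] at hends
    rcases Sym2.eq_iff.1 hends with ⟨h1, h1'⟩ | ⟨h1, h1'⟩
    · subst h1
      exact Or.inl ⟨he, (congrArg Fin.val h1').symm⟩
    · subst h1
      exact Or.inr ⟨he, (congrArg Fin.val h1').symm⟩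
  · rintro (⟨he, hv⟩ | ⟨he, hu⟩)
    · refine ⟨fun h => key u (h ▸ hv), u, he, ?_⟩
      rw [show (cycleGraph n h2).ends u
        = s(u, (⟨(u.val+1) % n, Nat.mod_lt _ hn⟩ : Fin n)) from rfl]
      exact Sym2.eq_iff.2 (Or.inl ⟨rfl, Fin.ext hv.symm⟩)
    · refine ⟨fun h => key v (h ▸ hu), v, he, ?_⟩
      rw [show (cycleGraph n h2).ends v
        = s(v, (⟨(v.val+1) % n, Nat.mod_lt _ hn⟩ : Fin n)) from rfl]
      exact Sym2.eq_iff.2 (Or.inr ⟨rfl, Fin.ext hu.symm⟩)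

theorem chain {n : ℕ} (h2 : 2 ≤ n) (hn : 0 < n) (E' : Finset (Fin n)) (a : ℕ) (ha : a < n)
    (m : ℕ) (h : ∀ j, j < m → vA n hn (a + j) ∈ E') :
    ∃ w : ((cycleGraph n h2).subgraph E').Walk (vA n hn a) (vA n hn (a + m)), w.length = m := by
  induction m with
  | zero => exact ⟨SimpleGraph.Walk.nil, rfl⟩
  | succ m ih =>
    obtain ⟨w, hw⟩ := ih (fun j hj => h j (by omega))
    have hadj : ((cycleGraph n h2).subgraph E').Adj (vA n hn (a+m)) (vA n hn (a+(m+1))) := by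
      rw [adj_iff]
      refine Or.inl ⟨h m (by omega), ?_⟩
      rw [vA_val, vA_val, Nat.mod_add_mod]
      congr 1
    exact ⟨w.concat hadj, (SimpleGraph.Walk.length_concat w hadj).trans (congrArg (· + 1) hw)⟩

theorem reach_const {V : Type} {G : SimpleGraph V} (f : V → Bool)
    (hf : ∀ u v, G.Adj u v → f u = f v) {u v : V} (h : G.Reachable u v) : f u = f v := by
  obtain ⟨w⟩ := h
  induction w with
  | nil => rfl
  | cons ha w ih => exact (hf _ _ ha).trans ih

theorem reach_of_arc {n : ℕ} (h2 : 2 ≤ n) (hn : 0 < n) (E' : Finset (Fin n)) (u v : Fin n)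
    (h : ∀ j, j < rho n u v → vA n hn (u.val + j) ∈ E') :
    ((cycleGraph n h2).subgraph E').Reachable u v := by
  obtain ⟨w, _⟩ := chain h2 hn E' u.val u.isLt (rho n u v) h
  rw [vA_self hn u, vA_spec hn u v] at w
  exact ⟨w⟩

theorem step_aux {n : ℕ} (hn : 0 < n) (E' : Finset (Fin n)) (u x y : Fin n) {q1 q2 : ℕ}
    (hq1n : q1 < n) (hq2n : q2 < n) (h12 : q1 < q2)
    (m1 : vA n hn (u.val + q1) ∉ E') (m2 : vA n hn (u.val + q2) ∉ E')
    (hx : x ∈ E') (hy : y.val = (x.val + 1) % n) :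
    (decide (rho n u x ≤ q1 ∨ q2 < rho n u x)) = decide (rho n u y ≤ q1 ∨ q2 < rho n u y) := by
  set q := rho n u x with hq
  have hqn : q < n := rho_lt hn u x
  have hxv : x = vA n hn (u.val + q) := (vA_spec hn u x).symm
  have hne1 : q ≠ q1 := by rintro rfl; rw [← hxv] at m1; exact m1 hx
  have hne2 : q ≠ q2 := by rintro rfl; rw [← hxv] at m2; exact m2 hx
  have hyv : y = vA n hn (u.val + (q + 1)) := by
    apply Fin.ext
    rw [hy, hxv, vA_val, vA_val, Nat.mod_add_mod]
    congr 1
  rcases Nat.lt_or_ge (q+1) n with hlt | hge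
  · have hr : rho n u y = q + 1 := by rw [hyv, rho_vA hn u _ hlt]
    rw [hr, decide_eq_decide]
    omega
  · have hqe : u.val + (q + 1) = u.val + n := by omega
    have hr : rho n u y = 0 := by
      rw [hyv, hqe, vA_add_n, vA_self hn, rho_self hn]
    rw [hr, decide_eq_decide]
    omega

theorem noReach {n : ℕ} (h2 : 2 ≤ n) (hn : 0 < n) (E' : Finset (Fin n)) (u v : Fin n)
    (q1 q2 : ℕ) (h1 : q1 < rho n u v) (hq2 : rho n u v ≤ q2) (hq2n : q2 < n)
    (m1 : vA n hn (u.val + q1) ∉ E') (m2 : vA n hn (u.val + q2) ∉ E') :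
    ¬ ((cycleGraph n h2).subgraph E').Reachable u v := by
  intro hr
  have h12 : q1 < q2 := lt_of_lt_of_le h1 hq2
  have hq1n : q1 < n := lt_trans h12 hq2n
  have key : ∀ x y : Fin n, ((cycleGraph n h2).subgraph E').Adj x y →
      (fun w => decide (rho n u w ≤ q1 ∨ q2 < rho n u w)) x
        = (fun w => decide (rho n u w ≤ q1 ∨ q2 < rho n u w)) y := by
    intro x y hadj
    rw [adj_iff] at hadj
    rcases hadj with ⟨hx, hy⟩ | ⟨hy, hx⟩
    · exact step_aux hn E' u x y hq1n hq2n h12 m1 m2 hx hy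
    · exact (step_aux hn E' u y x hq1n hq2n h12 m1 m2 hy hx).symm
  have hfin := reach_const _ key hr
  simp only [rho_self hn u] at hfin
  rw [decide_eq_decide] at hfin
  have := hfin.mp (Or.inl (Nat.zero_le _))
  omega

end SRelCycleAux
namespace SRelCycleAux

open Multigraph

theorem vA_shift {n : ℕ} (hn : 0 < n) (s : Fin n) (r x y : ℕ) (h : r + x = y ∨ r + x = y + n) :
    vA n hn ((vA n hn (s.val + r)).val + x) = vA n hn (s.val + y) := by
  rw [vA_vA]
  rcases h with h | h
  · congr 1; omega
  · have he : s.val + r + x = s.val + y + n := by omega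
    rw [he, vA_add_n]

theorem rho_vA_base {n : ℕ} (hn : 0 < n) (s : Fin n) {a : ℕ} (ha : a < n) (ha0 : 0 < a) :
    rho n (vA n hn (s.val + a)) s = n - a := by
  have hs := s.isLt
  unfold rho vA
  simp only
  obtain ⟨r1, e1, l1, d1⟩ := modspec hn (s.val + a) (by omega)
  rw [e1]
  obtain ⟨r2, e2, l2, d2⟩ := modspec hn (s.val + n - r1) (by omega)
  omega

/-- Two missing edges in the arc `s → t` (plus one beyond) leave a stranded vertex. -/
theorem strandA {n : ℕ} (h2 : 2 ≤ n) (hn : 0 < n) (s t : Fin n)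
    (E' : Finset (Fin n)) {p r q2 : ℕ} (hpr : p < r) (hrd : r < rho n s t)
    (hdq2 : rho n s t ≤ q2) (hq2n : q2 < n)
    (mp : vA n hn (s.val + p) ∉ E') (mr : vA n hn (s.val + r) ∉ E')
    (mq2 : vA n hn (s.val + q2) ∉ E') :
    ¬ ((cycleGraph n h2).subgraph E').Reachable (vA n hn (s.val + r)) s ∧
    ¬ ((cycleGraph n h2).subgraph E').Reachable (vA n hn (s.val + r)) t := by
  set d := rho n s t with hd
  have hdn : d < n := rho_lt hn s t
  have hrn : r < n := by omega
  set v := vA n hn (s.val + r) with hv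
  have ht : t = vA n hn (s.val + d) := (vA_spec hn s t).symm
  have hvs : rho n v s = n - r := by
    rw [hv, rho_vA_base hn s hrn (by omega)]
  have hvt : rho n v t = d - r := by
    rw [hv, ht, rho_vA_vA hn s hrn hdn]
    obtain ⟨w, e, l, dd⟩ := modspec hn (d + n - r) (by omega)
    omega
  constructor
  · refine noReach h2 hn E' v s (q2 - r) (p + n - r) ?_ ?_ (by omega) ?_ ?_
    · rw [hvs]; omega
    · rw [hvs]; omega
    · rw [hv, vA_shift hn s r (q2 - r) q2 (Or.inl (by omega))]; exact mq2
    · rw [hv, vA_shift hn s r (p + n - r) p (Or.inr (by omega))]; exact mp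
  · refine noReach h2 hn E' v t 0 (q2 - r) ?_ ?_ (by omega) ?_ ?_
    · rw [hvt]; omega
    · rw [hvt]; omega
    · rw [hv, vA_shift hn s r 0 r (Or.inl (by omega))]; exact mr
    · rw [hv, vA_shift hn s r (q2 - r) q2 (Or.inl (by omega))]; exact mq2

/-- Two missing edges in the arc `t → s` (plus one before) leave a stranded vertex. -/
theorem strandB {n : ℕ} (h2 : 2 ≤ n) (hn : 0 < n) (s t : Fin n)
    (E' : Finset (Fin n)) {q1 p r : ℕ} (hq1 : q1 < rho n s t) (hdp : rho n s t ≤ p)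
    (hpr : p < r) (hrn : r < n)
    (mq1 : vA n hn (s.val + q1) ∉ E') (mp : vA n hn (s.val + p) ∉ E')
    (mr : vA n hn (s.val + r) ∉ E') :
    ¬ ((cycleGraph n h2).subgraph E').Reachable (vA n hn (s.val + r)) s ∧
    ¬ ((cycleGraph n h2).subgraph E').Reachable (vA n hn (s.val + r)) t := by
  set d := rho n s t with hd
  have hdn : d < n := rho_lt hn s t
  set v := vA n hn (s.val + r) with hv
  have ht : t = vA n hn (s.val + d) := (vA_spec hn s t).symm
  have hvs : rho n v s = n - r := by
    rw [hv, rho_vA_base hn s hrn (by omega)]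
  have hvt : rho n v t = d + n - r := by
    rw [hv, ht, rho_vA_vA hn s hrn hdn]
    obtain ⟨w, e, l, dd⟩ := modspec hn (d + n - r) (by omega)
    omega
  constructor
  · refine noReach h2 hn E' v s 0 (q1 + n - r) ?_ ?_ (by omega) ?_ ?_
    · rw [hvs]; omega
    · rw [hvs]; omega
    · rw [hv, vA_shift hn s r 0 r (Or.inl (by omega))]; exact mr
    · rw [hv, vA_shift hn s r (q1 + n - r) q1 (Or.inr (by omega))]; exact mq1
  · refine noReach h2 hn E' v t 0 (p + n - r) ?_ ?_ (by omega) ?_ ?_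
    · rw [hvt]; omega
    · rw [hvt]; omega
    · rw [hv, vA_shift hn s r 0 r (Or.inl (by omega))]; exact mr
    · rw [hv, vA_shift hn s r (p + n - r) p (Or.inr (by omega))]; exact mp

theorem mem_of_ne {n : ℕ} (hn : 0 < n) (s : Fin n) {q1 q2 x : ℕ}
    (hq1 : q1 < n) (hq2 : q2 < n) (hx : x < n) (h1 : x ≠ q1) (h2 : x ≠ q2) :
    vA n hn (s.val + x) ∈
      (Finset.univ \ {vA n hn (s.val + q1), vA n hn (s.val + q2)} : Finset (Fin n)) := by
  simp only [Finset.mem_sdiff, Finset.mem_univ, true_and, Finset.mem_insert,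
    Finset.mem_singleton]
  push_neg
  exact ⟨fun h => h1 (vA_inj hn hx hq1 h), fun h => h2 (vA_inj hn hx hq2 h)⟩

theorem split_iff {n : ℕ} (h2 : 2 ≤ n) (hn : 0 < n) (s t : Fin n) (hst : s ≠ t)
    (E' : Finset (Fin n)) :
    (cycleGraph n h2).SplitState s t E' ↔
      ∃ q1 q2 : ℕ, q1 < rho n s t ∧ rho n s t ≤ q2 ∧ q2 < n ∧
        E' = Finset.univ \ {vA n hn (s.val + q1), vA n hn (s.val + q2)} := by
  set d := rho n s t with hd
  have hdn : d < n := rho_lt hn s t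
  have hd1 : 0 < d := by
    rcases Nat.eq_zero_or_pos d with h | h
    · exact absurd (((rho_eq_zero_iff hn s t).mp h).symm) hst
    · exact h
  have ht : t = vA n hn (s.val + d) := (vA_spec hn s t).symm
  constructor
  · rintro ⟨hns, hall⟩
    have hex1 : ∃ q1, q1 < d ∧ vA n hn (s.val + q1) ∉ E' := by
      by_contra hcon
      push_neg at hcon
      exact hns (reach_of_arc h2 hn E' s t hcon)
    obtain ⟨q1, hq1d, hm1⟩ := hex1
    have hts : rho n t s = n - d := by
      have := rho_symm hn s t hst
      omega
    have hex2 : ∃ j, j < n - d ∧ vA n hn (t.val + j) ∉ E' := by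
      by_contra hcon
      push_neg at hcon
      rw [← hts] at hcon
      exact hns (reach_of_arc h2 hn E' t s hcon).symm
    obtain ⟨j0, hj0, hm2'⟩ := hex2
    have hm2 : vA n hn (s.val + (d + j0)) ∉ E' := by
      rw [← vA_shift hn s d j0 (d + j0) (Or.inl rfl), ← ht]
      exact hm2'
    set q2 := d + j0 with hq2def
    refine ⟨q1, q2, hq1d, by omega, by omega, ?_⟩
    ext e
    simp only [Finset.mem_sdiff, Finset.mem_univ, true_and, Finset.mem_insert,
      Finset.mem_singleton]
    constructor
    · intro he
      rintro (rfl | rfl)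
      · exact hm1 he
      · exact hm2 he
    · intro hne
      push_neg at hne
      obtain ⟨hne1, hne2⟩ := hne
      by_contra hnm
      have hq3n : rho n s e < n := rho_lt hn s e
      have he3 : e = vA n hn (s.val + rho n s e) := (vA_spec hn s e).symm
      set q3 := rho n s e with hq3
      rw [he3] at hnm
      have hq31 : q3 ≠ q1 := fun h => hne1 (by rw [he3, h])
      have hq32 : q3 ≠ q2 := fun h => hne2 (by rw [he3, h])
      rcases Nat.lt_or_ge q3 d with hcase | hcase
      · rcases Nat.lt_or_ge q1 q3 with hlt | hge
        · obtain ⟨hA, hB⟩ := strandA h2 hn s t E' hlt hcase (by omega) (by omega) hm1 hnm hm2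
          rcases hall (vA n hn (s.val + q3)) with h | h
          · exact hA h
          · exact hB h
        · have hlt : q3 < q1 := by omega
          obtain ⟨hA, hB⟩ := strandA h2 hn s t E' hlt hq1d (by omega) (by omega) hnm hm1 hm2
          rcases hall (vA n hn (s.val + q1)) with h | h
          · exact hA h
          · exact hB h
      · rcases Nat.lt_or_ge q2 q3 with hlt | hge
        · obtain ⟨hA, hB⟩ := strandB h2 hn s t E' hq1d (by omega) hlt hq3n hm1 hm2 hnm
          rcases hall (vA n hn (s.val + q3)) with h | h
          · exact hA h
          · exact hB h
        · have hlt : q3 < q2 := by omega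
          obtain ⟨hA, hB⟩ := strandB h2 hn s t E' hq1d hcase hlt (by omega) hm1 hnm hm2
          rcases hall (vA n hn (s.val + q2)) with h | h
          · exact hA h
          · exact hB h
  · rintro ⟨q1, q2, hq1d, hdq2, hq2n, rfl⟩
    set E' := (Finset.univ \ {vA n hn (s.val + q1), vA n hn (s.val + q2)} : Finset (Fin n))
      with hE'
    have hm1 : vA n hn (s.val + q1) ∉ E' := by simp [hE']
    have hm2 : vA n hn (s.val + q2) ∉ E' := by simp [hE']
    have hmm : ∀ x, x < n → x ≠ q1 → x ≠ q2 → vA n hn (s.val + x) ∈ E' :=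
      fun x hx h1 h2 => mem_of_ne hn s (by omega) hq2n hx h1 h2
    refine ⟨noReach h2 hn E' s t q1 q2 hq1d hdq2 hq2n hm1 hm2, ?_⟩
    intro v
    have hpn : rho n s v < n := rho_lt hn s v
    have hv : v = vA n hn (s.val + rho n s v) := (vA_spec hn s v).symm
    set p := rho n s v with hp
    rcases le_or_gt p q1 with hc1 | hc1
    · left
      refine (reach_of_arc h2 hn E' s v ?_).symm
      intro j hj
      rw [← hp] at hj
      exact hmm j (by omega) (by omega) (by omega)
    · rcases le_or_gt p d with hc2 | hc2
      · right
        have hvt : rho n v t = d - p := by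
          rw [hv, ht, rho_vA_vA hn s hpn hdn]
          obtain ⟨w, e, l, dd⟩ := modspec hn (d + n - p) (by omega)
          omega
        refine reach_of_arc h2 hn E' v t ?_
        intro j hj
        rw [hvt] at hj
        rw [hv, vA_shift hn s p j (p + j) (Or.inl rfl)]
        exact hmm (p + j) (by omega) (by omega) (by omega)
      · rcases le_or_gt p q2 with hc3 | hc3
        · right
          have htv : rho n t v = p - d := by
            rw [hv, ht, rho_vA_vA hn s hdn hpn]
            obtain ⟨w, e, l, dd⟩ := modspec hn (p + n - d) (by omega)
            omega
          refine (reach_of_arc h2 hn E' t v ?_).symm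
          intro j hj
          rw [htv] at hj
          rw [ht, vA_shift hn s d j (d + j) (Or.inl rfl)]
          exact hmm (d + j) (by omega) (by omega) (by omega)
        · left
          have hvs : rho n v s = n - p := by
            rw [hv, rho_vA_base hn s hpn (by omega)]
          refine reach_of_arc h2 hn E' v s ?_
          intro j hj
          rw [hvs] at hj
          rw [hv, vA_shift hn s p j (p + j) (Or.inl rfl)]
          exact hmm (p + j) (by omega) (by omega) (by omega)

end SRelCycleAux
namespace SRelCycleAux

open Multigraph

theorem split_card {n : ℕ} (h2 : 2 ≤ n) (hn : 0 < n) (s t : Fin n) (hst : s ≠ t)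
    (E' : Finset (Fin n)) (hsp : (cycleGraph n h2).SplitState s t E') : E'.card = n - 2 := by
  rw [split_iff h2 hn s t hst] at hsp
  obtain ⟨q1, q2, h1, h2', h3, rfl⟩ := hsp
  have hq1n : q1 < n := by have := rho_lt hn s t; omega
  have hne : vA n hn (s.val + q1) ≠ vA n hn (s.val + q2) := by
    intro h
    have := vA_inj hn hq1n h3 h
    omega
  rw [Finset.card_sdiff_of_subset (Finset.subset_univ _), Finset.card_univ, Fintype.card_fin,
    Finset.card_insert_of_notMem (by simp [hne]), Finset.card_singleton]

theorem card_split {n : ℕ} (h2 : 2 ≤ n) (hn : 0 < n) (s t : Fin n) (hst : s ≠ t)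
    [inst : DecidablePred fun E' : Finset (Fin n) => (cycleGraph n h2).SplitState s t E'] :
    (Finset.univ.filter fun E' : Finset (Fin n) => (cycleGraph n h2).SplitState s t E').card
      = rho n s t * (n - rho n s t) := by
  set d := rho n s t with hd
  have hdn : d < n := rho_lt hn s t
  have him : (Finset.univ.filter fun E' : Finset (Fin n) =>
        (cycleGraph n h2).SplitState s t E') =
      ((Finset.Ico 0 d ×ˢ Finset.Ico d n).image
        fun q : ℕ × ℕ => Finset.univ \ {vA n hn (s.val + q.1), vA n hn (s.val + q.2)}) := by
    ext E'
    simp only [Finset.mem_filter, Finset.mem_univ, true_and, Finset.mem_image,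
      Finset.mem_product, Finset.mem_Ico]
    rw [split_iff h2 hn s t hst]
    constructor
    · rintro ⟨q1, q2, h1, h2', h3, rfl⟩
      exact ⟨(q1, q2), ⟨⟨Nat.zero_le _, h1⟩, h2', h3⟩, rfl⟩
    · rintro ⟨⟨q1, q2⟩, ⟨⟨_, h1⟩, h2', h3⟩, rfl⟩
      exact ⟨q1, q2, h1, h2', h3, rfl⟩
  rw [him, Finset.card_image_of_injOn, Finset.card_product, Nat.card_Ico, Nat.card_Ico,
    Nat.sub_zero]
  rintro ⟨q1, q2⟩ hmem ⟨q1', q2'⟩ hmem' heq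
  simp only [Finset.coe_product, Set.mem_prod, Finset.mem_coe, Finset.mem_Ico] at hmem hmem'
  obtain ⟨⟨_, hq1⟩, hq2, hq2n⟩ := hmem
  obtain ⟨⟨_, hq1'⟩, hq2', hq2n'⟩ := hmem'
  have hq1n : q1 < n := by omega
  have hq1n' : q1' < n := by omega
  have hpair : ({vA n hn (s.val + q1), vA n hn (s.val + q2)} : Finset (Fin n)) =
      {vA n hn (s.val + q1'), vA n hn (s.val + q2')} := by
    have h3 := congrArg (fun S : Finset (Fin n) => Finset.univ \ S) heq
    simpa [Finset.sdiff_sdiff_self_left, Finset.univ_inter] using h3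
  have e1 : vA n hn (s.val + q1) ∈
      ({vA n hn (s.val + q1'), vA n hn (s.val + q2')} : Finset (Fin n)) := by
    rw [← hpair]; exact Finset.mem_insert_self _ _
  have e2 : vA n hn (s.val + q2) ∈
      ({vA n hn (s.val + q1'), vA n hn (s.val + q2')} : Finset (Fin n)) := by
    rw [← hpair]; exact Finset.mem_insert_of_mem (Finset.mem_singleton_self _)
  rw [Finset.mem_insert, Finset.mem_singleton] at e1 e2
  have hq1e : q1 = q1' := by
    rcases e1 with h | h
    · exact vA_inj hn hq1n hq1n' h
    · have := vA_inj hn hq1n hq2n' h; omega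
  have hq2e : q2 = q2' := by
    rcases e2 with h | h
    · have := vA_inj hn hq2n hq1n' h; omega
    · exact vA_inj hn hq2n hq2n' h
  simp [hq1e, hq2e]

theorem walk_disp {n : ℕ} (h2 : 2 ≤ n) {E' : Finset (Fin n)} {u v : Fin n}
    (w : ((cycleGraph n h2).subgraph E').Walk u v) :
    ∃ a b : ℕ, w.length = a + b ∧ (u.val + a) % n = (v.val + b) % n := by
  induction w with
  | nil => exact ⟨0, 0, rfl, rfl⟩
  | @cons x y z h w ih =>
    obtain ⟨a, b, hl, he⟩ := ih
    rw [adj_iff] at h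
    rcases h with ⟨_, hy⟩ | ⟨_, hy⟩
    · refine ⟨a + 1, b, by show w.length + 1 = a + 1 + b; exact (congrArg (· + 1) hl).trans (by omega), ?_⟩
      rw [hy, Nat.mod_add_mod] at he
      have e : x.val + (a + 1) = x.val + 1 + a := by omega
      rw [e]; exact he
    · refine ⟨a, b + 1, by show w.length + 1 = a + (b + 1); exact (congrArg (· + 1) hl).trans (by omega), ?_⟩
      rw [hy, Nat.mod_add_mod]
      have e1 : y.val + 1 + a = y.val + a + 1 := by omega
      have e2 : z.val + (b + 1) = z.val + b + 1 := by omega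
      rw [e1, e2, ← Nat.mod_add_mod, he, Nat.mod_add_mod]

theorem dist_cycle {n : ℕ} (h2 : 2 ≤ n) (hn : 0 < n) (s t : Fin n) (hst : s ≠ t) :
    ((cycleGraph n h2).subgraph Finset.univ).dist s t
      = min (rho n s t) (n - rho n s t) := by
  have hdn : rho n s t < n := rho_lt hn s t
  have hd1 : 0 < rho n s t := by
    rcases Nat.eq_zero_or_pos (rho n s t) with h | h
    · exact absurd (((rho_eq_zero_iff hn s t).mp h).symm) hst
    · exact h
  have hts : rho n t s = n - rho n s t := by have := rho_symm hn s t hst; omega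
  have ht : t = vA n hn (s.val + rho n s t) := (vA_spec hn s t).symm
  obtain ⟨w1, hw1⟩ := chain h2 hn Finset.univ s.val s.isLt (rho n s t)
    (fun j _ => Finset.mem_univ _)
  obtain ⟨w2, hw2⟩ := chain h2 hn Finset.univ t.val t.isLt (rho n t s)
    (fun j _ => Finset.mem_univ _)
  have hub1 : ((cycleGraph n h2).subgraph Finset.univ).dist s t ≤ rho n s t := by
    have h := SimpleGraph.dist_le (w1.copy (vA_self hn s) (vA_spec hn s t))
    exact h.trans_eq ((SimpleGraph.Walk.length_copy _ _ _).trans hw1)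
  have hub2 : ((cycleGraph n h2).subgraph Finset.univ).dist s t ≤ n - rho n s t := by
    refine (SimpleGraph.dist_comm).trans_le ?_
    have h := SimpleGraph.dist_le (w2.copy (vA_self hn t) (vA_spec hn t s))
    exact h.trans_eq ((SimpleGraph.Walk.length_copy _ _ _).trans (hw2.trans hts))
  have hr : ((cycleGraph n h2).subgraph Finset.univ).Reachable s t :=
    ⟨w1.copy (vA_self hn s) (vA_spec hn s t)⟩
  obtain ⟨w, hw⟩ := hr.exists_walk_length_eq_dist
  obtain ⟨a, b, hl, he⟩ := walk_disp h2 w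
  refine le_antisymm (le_min hub1 hub2) ?_
  by_contra hlt
  push_neg at hlt
  have hab : a + b < min (rho n s t) (n - rho n s t) := by omega
  rw [ht, vA_val, Nat.mod_add_mod] at he
  have hdb : a = rho n s t + b := addmod_inj hn s.isLt (by omega) (by omega)
    (by rw [he]; congr 1; omega)
  omega

end SRelCycleAux
namespace SRelCycleAux

open Multigraph

theorem sRel_formula {n : ℕ} (h2 : 2 ≤ n) (hn : 0 < n) (s t : Fin n) (hst : s ≠ t) (p : ℝ) :
    (cycleGraph n h2).sRel s t p
      = ((rho n s t * (n - rho n s t) : ℕ) : ℝ) * p ^ (n - 2) * (1 - p) ^ 2 := by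
  classical
  unfold Multigraph.sRel
  rw [← Finset.sum_filter]
  have h1 : (∑ E' ∈ Finset.univ.filter fun E' : Finset (cycleGraph n h2).E =>
        (cycleGraph n h2).SplitState s t E',
        p ^ E'.card * (1 - p) ^ (Fintype.card (cycleGraph n h2).E - E'.card))
      = ∑ _E' ∈ Finset.univ.filter (fun E' : Finset (cycleGraph n h2).E =>
        (cycleGraph n h2).SplitState s t E'), (p ^ (n - 2) * (1 - p) ^ 2) := by
    refine Finset.sum_congr rfl fun E' hE' => ?_
    rw [Finset.mem_filter] at hE'
    have hc : E'.card = n - 2 := split_card h2 hn s t hst E' hE'.2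
    have hcE : Fintype.card (cycleGraph n h2).E = n := Fintype.card_fin n
    rw [hc, hcE]
    congr 2
    omega
  rw [h1, Finset.sum_const]
  have hcard : (Finset.univ.filter fun E' : Finset (cycleGraph n h2).E =>
      (cycleGraph n h2).SplitState s t E').card = rho n s t * (n - rho n s t) :=
    card_split h2 hn s t hst
  rw [hcard, nsmul_eq_mul, mul_assoc]

end SRelCycleAux
/-- If `s ≠ t` are vertices of the cycle `C_n` (`n ≥ 3`) at distance `k`,
then `sRel(C_n,s,t;p) = k(n-k)·p^{n-2}·(1-p)²` for all `p ∈ [0,1]`. -/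
theorem sRel_cycle (n k : ℕ) (hn : 3 ≤ n) (s t : Fin n) (hst : s ≠ t)
    (hk : ((Multigraph.cycleGraph n (by omega)).subgraph Finset.univ).dist s t = k) :
    ∀ p : ℝ, 0 ≤ p → p ≤ 1 →
      (Multigraph.cycleGraph n (by omega)).sRel s t p =
        ((k * (n - k) : ℕ) : ℝ) * p ^ (n - 2) * (1 - p) ^ 2 := by
  intro p hp0 hp1
  have hpos : 0 < n := by omega
  have hdn : SRelCycleAux.rho n s t < n := SRelCycleAux.rho_lt hpos s t
  rw [SRelCycleAux.dist_cycle _ hpos s t hst] at hk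
  have hkey : k * (n - k) = SRelCycleAux.rho n s t * (n - SRelCycleAux.rho n s t) := by
    rcases le_total (SRelCycleAux.rho n s t) (n - SRelCycleAux.rho n s t) with h | h
    · rw [min_eq_left h] at hk
      rw [← hk]
    · rw [min_eq_right h] at hk
      have h1 : k = n - SRelCycleAux.rho n s t := hk.symm
      have h2 : n - (n - SRelCycleAux.rho n s t) = SRelCycleAux.rho n s t := by omega
      rw [h1, h2, Nat.mul_comm]
  rw [SRelCycleAux.sRel_formula _ hpos s t hst p, ← hkey]
end

section
/- Let G be a connected finite loopless multigraph with distinct vertices s and u, and let G' be the graph obtained from G by adjoining a new vertex t joined by a single new edge to u. Then for all p ∈ [0,1], sRel(G',s,t;p) = (1-p)·Rel(G;p) + p·sRel(G,s,u;p). -/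
section Aux

open Finset

namespace Multigraph

variable (G : Multigraph) (u : G.V)

lemma ends_addPendant_none : (G.addPendant u).ends none = s(some u, none) := rfl

lemma ends_addPendant_some (e : G.E) :
    (G.addPendant u).ends (some e) = (G.ends e).map some := rfl

lemma adj_some (F : Finset (Option G.E)) (a b : G.V) :
    ((G.addPendant u).subgraph F).Adj (some a) (some b) ↔ (G.subgraph F.eraseNone).Adj a b := by
  constructor
  · rintro ⟨hne, e, he, hends⟩
    cases e with
    | none =>
      rw [ends_addPendant_none] at hends
      replace hends := Sym2.eq_iff.mp hends
      simp at hends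
    | some e' =>
      rw [ends_addPendant_some] at hends
      refine ⟨fun h => hne (by rw [h]), e', Finset.mem_eraseNone.mpr he, ?_⟩
      exact Sym2.map.injective (Option.some_injective G.V)
        (hends.trans (Sym2.map_pair_eq some a b).symm)
  · rintro ⟨hne, e, he, hends⟩
    exact ⟨fun h => hne (Option.some_injective _ h), some e, Finset.mem_eraseNone.mp he,
      by rw [ends_addPendant_some, hends]; exact Sym2.map_pair_eq some a b⟩

lemma adj_none (F : Finset (Option G.E)) (x : Option G.V) :
    ((G.addPendant u).subgraph F).Adj x none ↔ none ∈ F ∧ x = some u := by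
  constructor
  · rintro ⟨hne, e, he, hends⟩
    cases e with
    | none =>
      rw [ends_addPendant_none] at hends
      replace hends := Sym2.eq_iff.mp hends
      rcases hends with ⟨h1, h2⟩ | ⟨h1, h2⟩
      · exact ⟨he, h1.symm⟩
      · simp at h1
    | some e' =>
      exfalso
      obtain ⟨⟨c, d⟩, hcd⟩ := Quot.exists_rep (G.ends e')
      rw [ends_addPendant_some, ← hcd] at hends
      rw [show Sym2.map some (Quot.mk _ (c, d)) = s(some c, some d) from rfl] at hends
      replace hends := Sym2.eq_iff.mp hends
      rcases hends with ⟨-, h2⟩ | ⟨h2, -⟩ <;> exact Option.some_ne_none _ h2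
  · rintro ⟨hF, rfl⟩
    exact ⟨Option.some_ne_none u, none, hF, rfl⟩

lemma walk_reach (F : Finset (Option G.E)) {x y : Option G.V}
    (w : ((G.addPendant u).subgraph F).Walk x y) :
    (G.subgraph F.eraseNone).Reachable (x.getD u) (y.getD u) := by
  induction w with
  | nil => exact SimpleGraph.Reachable.refl _
  | @cons x z y h w ih =>
    refine SimpleGraph.Reachable.trans ?_ ih
    cases x with
    | some a =>
      cases z with
      | some b => exact ((adj_some G u F a b).mp h).reachable
      | none =>
        obtain ⟨-, ha⟩ := (adj_none G u F _).mp h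
        obtain rfl : a = u := Option.some_injective _ ha
        exact SimpleGraph.Reachable.refl _
    | none =>
      cases z with
      | some b =>
        obtain ⟨-, hb⟩ := (adj_none G u F _).mp h.symm
        obtain rfl : b = u := Option.some_injective _ hb
        exact SimpleGraph.Reachable.refl _
      | none => exact absurd rfl h.ne

lemma reach_some (F : Finset (Option G.E)) (a b : G.V) :
    ((G.addPendant u).subgraph F).Reachable (some a) (some b) ↔
      (G.subgraph F.eraseNone).Reachable a b := by
  constructor
  · rintro ⟨w⟩
    simpa using walk_reach G u F w
  · intro h
    exact h.map (⟨some, fun {x y} hxy => (adj_some G u F x y).mpr hxy⟩ :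
      G.subgraph F.eraseNone →g (G.addPendant u).subgraph F)

lemma reach_none_mem (F : Finset (Option G.E)) (hF : none ∈ F) (a : G.V) :
    ((G.addPendant u).subgraph F).Reachable (some a) none ↔
      (G.subgraph F.eraseNone).Reachable a u := by
  constructor
  · rintro ⟨w⟩
    simpa using walk_reach G u F w
  · intro h
    exact ((reach_some G u F a u).mpr h).trans
      ((adj_none G u F (some u)).mpr ⟨hF, rfl⟩).reachable

lemma reach_none_eq (F : Finset (Option G.E)) (hF : none ∉ F) (x : Option G.V)
    (h : ((G.addPendant u).subgraph F).Reachable none x) : x = none := by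
  obtain ⟨w⟩ := h
  cases w with
  | nil => rfl
  | cons h w => exact absurd ((adj_none G u F _).mp h.symm).1 hF

lemma split_L0 (s : G.V) (E' : Finset G.E) :
    (G.addPendant u).SplitState (some s) none (E'.map Function.Embedding.some) ↔
      (G.subgraph E').Connected := by
  have hnone : (none : Option G.E) ∉ E'.map Function.Embedding.some := by simp
  constructor
  · rintro ⟨-, hall⟩
    rw [SimpleGraph.connected_iff_exists_forall_reachable]
    refine ⟨s, fun v => ?_⟩
    rcases hall (some v) with h | h
    · have h2 := (reach_some G u _ v s).mp h
      erw [Finset.eraseNone_map_some] at h2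
      exact h2.symm
    · exact absurd (reach_none_eq G u _ hnone _ h.symm) (by simp)
  · intro hconn
    constructor
    · intro h
      exact absurd (reach_none_eq G u _ hnone _ h.symm) (by simp)
    · intro v
      cases v with
      | none => exact Or.inr (SimpleGraph.Reachable.refl _)
      | some a =>
        left
        refine (reach_some G u _ a s).mpr ?_
        erw [Finset.eraseNone_map_some]
        exact hconn.preconnected a s

lemma split_L1 (s : G.V) (E' : Finset G.E) :
    (G.addPendant u).SplitState (some s) none E'.insertNone ↔ G.SplitState s u E' := by
  have hmem : (none : Option G.E) ∈ E'.insertNone := Finset.none_mem_insertNone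
  have herase : (E'.insertNone).eraseNone = E' := Finset.eraseNone_insertNone E'
  constructor
  · rintro ⟨hnr, hall⟩
    constructor
    · intro h
      exact hnr ((reach_none_mem G u _ hmem s).mpr (by rwa [herase]))
    · intro v
      rcases hall (some v) with h | h
      · left
        have h2 := (reach_some G u _ v s).mp h
        rwa [herase] at h2
      · right
        have h2 := (reach_none_mem G u _ hmem v).mp h
        rwa [herase] at h2
  · rintro ⟨hnr, hall⟩
    constructor
    · intro h
      have h2 := (reach_none_mem G u _ hmem s).mp h
      rw [herase] at h2
      exact hnr h2
    · intro v
      cases v with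
      | none => exact Or.inr (SimpleGraph.Reachable.refl _)
      | some a =>
        rcases hall a with h | h
        · exact Or.inl ((reach_some G u _ a s).mpr (by rwa [herase]))
        · exact Or.inr ((reach_none_mem G u _ hmem a).mpr (by rwa [herase]))

end Multigraph

/-- The equivalence between `Bool × Finset α` and `Finset (Option α)` sending `(b, s)` to
`s` lifted along `some`, with `none` inserted when `b = true`. -/
def optFinsetEquiv (α : Type) [DecidableEq α] : Bool × Finset α ≃ Finset (Option α) where
  toFun x := if x.1 then x.2.insertNone else x.2.map Function.Embedding.some
  invFun F := (decide (none ∈ F), F.eraseNone)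
  left_inv := by
    rintro ⟨b, E'⟩
    cases b <;> simp
  right_inv := by
    intro F
    by_cases h : none ∈ F
    · simp [h, Finset.insertNone_eraseNone, Finset.insert_eq_self.mpr h]
    · simp [h, Finset.map_some_eraseNone, Finset.erase_eq_of_notMem h]

@[simp] lemma optFinsetEquiv_true (α : Type) [DecidableEq α] (s : Finset α) :
    optFinsetEquiv α (true, s) = s.insertNone := rfl

@[simp] lemma optFinsetEquiv_false (α : Type) [DecidableEq α] (s : Finset α) :
    optFinsetEquiv α (false, s) = s.map Function.Embedding.some := rfl

end Aux

/-- If `G'` is obtained from a connected multigraph `G` by adjoining a new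
vertex `t` joined by a single new edge to `u`, then
`sRel(G',s,t;p) = (1-p)·Rel(G;p) + p·sRel(G,s,u;p)` for all `p ∈ [0,1]`. -/
theorem sRel_addPendant (G : Multigraph) (s u : G.V) (hG : G.Connected) (hsu : s ≠ u) :
    ∀ p : ℝ, 0 ≤ p → p ≤ 1 →
      (G.addPendant u).sRel (some s) none p = (1 - p) * G.Rel p + p * G.sRel s u p := by
  intro p hp0 hp1
  classical
  have hcard : Fintype.card (G.addPendant u).E = Fintype.card G.E + 1 := Fintype.card_option
  have h1 : ∑ E' : Finset G.E,
      (if (G.addPendant u).SplitState (some s) none E'.insertNone then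
        p ^ E'.insertNone.card *
          (1 - p) ^ (Fintype.card (G.addPendant u).E - E'.insertNone.card) else 0)
      = p * G.sRel s u p := by
    rw [Multigraph.sRel, Finset.mul_sum]
    refine Finset.sum_congr rfl fun E' _ => ?_
    rw [if_congr (Multigraph.split_L1 G u s E') rfl rfl, Finset.card_insertNone, hcard,
      Nat.succ_sub_succ, pow_succ]
    split_ifs <;> ring
  have h0 : ∑ E' : Finset G.E,
      (if (G.addPendant u).SplitState (some s) none (E'.map Function.Embedding.some) then
        p ^ (E'.map Function.Embedding.some).card *
          (1 - p) ^ (Fintype.card (G.addPendant u).E -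
            (E'.map Function.Embedding.some).card) else 0)
      = (1 - p) * G.Rel p := by
    rw [Multigraph.Rel, Finset.mul_sum]
    refine Finset.sum_congr rfl fun E' _ => ?_
    have hc : E'.card ≤ Fintype.card G.E := E'.card_le_univ
    rw [if_congr (Multigraph.split_L0 G u s E') rfl rfl, Finset.card_map, hcard,
      Nat.succ_sub hc, pow_succ]
    split_ifs <;> ring
  change (∑ F : Finset (Option G.E),
        if (G.addPendant u).SplitState (some s) none F then
          p ^ F.card * (1 - p) ^ (Fintype.card (G.addPendant u).E - F.card) else 0) = _
  rw [← Equiv.sum_comp (optFinsetEquiv G.E), Fintype.sum_prod_type, Fintype.sum_bool]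
  simp only [optFinsetEquiv_true, optFinsetEquiv_false]
  erw [h1, h0]
  ring
end

section
/- For m ≥ n ≥ 3 and for any placement of the bundle, the graph G_{n,m} with terminals s and t satisfies, for all p ∈ [0,1], sRel(G_{n,m},s,t;p) = (n-2)(1-p)p^{n-3}(1-(1-p)^{m-n+2}) + (1-p)^{m-n+2} p^{n-2}; in particular, the split reliability of G_{n,m} does not depend on which edge of the path carries the bundle. -/
namespace SRel13

open Finset

variable {n m k : ℕ}

/-- position of an edge of `Gnm` -/
def pos (n k : ℕ) (e : Fin m) : ℕ := if e.val < n - 1 then e.val else k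

lemma pos_lt (hk : k < n - 1) (e : Fin m) : pos n k e < n - 1 := by
  unfold pos; split <;> omega

lemma ends_eq (hn : 3 ≤ n) (hm : n ≤ m) (hk : k < n - 1) (e : Fin m) :
    (Multigraph.Gnm n m k hk).ends e =
      s((⟨pos n k e, by have := pos_lt hk e; omega⟩ : Fin n),
        (⟨pos n k e + 1, by have := pos_lt hk e; omega⟩ : Fin n)) := by
  show (if h : e.val < n - 1 then
      s((⟨e.val, by omega⟩ : Fin n), (⟨e.val + 1, by omega⟩ : Fin n))
    else
      s((⟨k, by omega⟩ : Fin n), (⟨k + 1, by omega⟩ : Fin n))) = _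
  unfold pos
  split <;> rfl

def occ (n k : ℕ) (E' : Finset (Fin m)) (j : ℕ) : Prop := ∃ e ∈ E', pos n k e = j

lemma reach_invariant (hn : 3 ≤ n) (hm : n ≤ m) (hk : k < n - 1) (E' : Finset (Fin m))
    (l : ℕ) (hocc : ¬ occ n k E' l) (u v : Fin n)
    (h : ((Multigraph.Gnm n m k hk).subgraph E').Reachable u v) :
    (u.val ≤ l ↔ v.val ≤ l) := by
  obtain ⟨w⟩ := h
  induction w with
  | nil => rfl
  | @cons u b v h w ih =>
    obtain ⟨hne, e, he, hends⟩ := h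
    rw [ends_eq hn hm hk e] at hends
    have hj := pos_lt hk e
    have hjl : pos n k e ≠ l := fun hc => hocc ⟨e, he, hc⟩
    replace hends := Sym2.eq_iff.1 hends
    have hub : (u.val ≤ l ↔ b.val ≤ l) := by
      rcases hends with ⟨h1, h2⟩ | ⟨h1, h2⟩ <;>
        · have hv1 := congrArg Fin.val h1
          have hv2 := congrArg Fin.val h2
          simp only [] at hv1 hv2
          omega
    exact hub.trans ih

lemma adj_step (hn : 3 ≤ n) (hm : n ≤ m) (hk : k < n - 1) (E' : Finset (Fin m))
    (j : ℕ) (hj : j < n - 1) (hocc : occ n k E' j) :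
    ((Multigraph.Gnm n m k hk).subgraph E').Adj ⟨j, by omega⟩ ⟨j + 1, by omega⟩ := by
  obtain ⟨e, he, hpe⟩ := hocc
  have hne : (⟨j, by omega⟩ : Fin n) ≠ ⟨j + 1, by omega⟩ := by
    intro hc
    have := congrArg Fin.val hc
    simp only [] at this
    omega
  refine ⟨hne, e, he, ?_⟩
  rw [ends_eq hn hm hk e]
  congr 1 <;> simp [hpe]

lemma reach_chain (hn : 3 ≤ n) (hm : n ≤ m) (hk : k < n - 1) (E' : Finset (Fin m)) :
    ∀ j (hjn : j ≤ n - 1), ∀ i (hij : i ≤ j),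
      (∀ l, i ≤ l → l < j → occ n k E' l) →
      ((Multigraph.Gnm n m k hk).subgraph E').Reachable ⟨i, by omega⟩ ⟨j, by omega⟩ := by
  intro j
  induction j with
  | zero =>
    intro _ i hij _
    have : i = 0 := by omega
    subst this
    exact SimpleGraph.Reachable.refl _
  | succ j ih =>
    intro hjn i hij hall
    rcases Nat.eq_or_lt_of_le hij with he | hlt
    · subst he; exact SimpleGraph.Reachable.refl _
    · have h1 : ((Multigraph.Gnm n m k hk).subgraph E').Reachable ⟨i, by omega⟩ ⟨j, by omega⟩ :=
        ih (by omega) i (by omega) (fun l h1 h2 => hall l h1 (by omega))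
      exact h1.trans (adj_step hn hm hk E' j (by omega) (hall j (by omega) (by omega))).reachable

lemma splitState_iff (hn : 3 ≤ n) (hm : n ≤ m) (hk : k < n - 1) (E' : Finset (Fin m)) :
    (Multigraph.Gnm n m k hk).SplitState (⟨0, by omega⟩ : Fin n) (⟨n - 1, by omega⟩ : Fin n) E' ↔
      ∃ l, l < n - 1 ∧ ¬ occ n k E' l ∧ ∀ l', l' < n - 1 → ¬ occ n k E' l' → l' = l := by
  constructor
  · rintro ⟨hnr, hall⟩
    have hex : ∃ l, l < n - 1 ∧ ¬ occ n k E' l := by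
      by_contra hc
      push_neg at hc
      exact hnr (reach_chain hn hm hk E' (n - 1) le_rfl 0 (by omega)
        (fun l h1 h2 => hc l h2))
    obtain ⟨l, hl, hlo⟩ := hex
    refine ⟨l, hl, hlo, ?_⟩
    intro l' hl' hlo'
    by_contra hne
    -- two distinct unoccupied positions l, l'; derive contradiction
    have key : ∀ l1 l2, l1 < l2 → l2 < n - 1 → ¬ occ n k E' l1 → ¬ occ n k E' l2 → False := by
      intro l1 l2 h12 hl2 h1 h2
      rcases hall ⟨l1 + 1, by omega⟩ with h | h
      · have := reach_invariant hn hm hk E' l1 h1 _ _ h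
        simp only [] at this
        omega
      · have := reach_invariant hn hm hk E' l2 h2 _ _ h
        simp only [] at this
        omega
    rcases Nat.lt_or_ge l' l with h | h
    · exact key l' l h hl hlo' hlo
    · exact key l l' (by omega) hl' hlo hlo'
  · rintro ⟨l, hl, hlo, huniq⟩
    constructor
    · intro hr
      have := reach_invariant hn hm hk E' l hlo _ _ hr
      simp only [] at this
      omega
    · rintro ⟨i, hi⟩
      by_cases hil : i ≤ l
      · left
        have : ((Multigraph.Gnm n m k hk).subgraph E').Reachable ⟨0, by omega⟩ ⟨i, by omega⟩ :=
          reach_chain hn hm hk E' i (by omega) 0 (by omega) (fun l' h1 h2 => by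
            by_contra hc
            have := huniq l' (by omega) hc
            omega)
        exact this.symm
      · right
        exact reach_chain hn hm hk E' (n - 1) le_rfl i (by omega) (fun l' h1 h2 => by
          by_contra hc
          have := huniq l' (by omega) hc
          omega)


end SRel13
namespace SRel13

open Finset

variable {n m k : ℕ}

lemma sum_w (p : ℝ) (N : ℕ) :
    ∑ B : Finset (Fin N), p ^ B.card * (1 - p) ^ (N - B.card) = 1 := by
  classical
  have h1 : ∑ B : Finset (Fin N), p ^ B.card * (1 - p) ^ (N - B.card)
      = ∑ B ∈ (univ : Finset (Fin N)).powerset, (∏ _i ∈ B, p) * ∏ _i ∈ univ \ B, (1 - p) := by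
    rw [Finset.powerset_univ]
    refine Finset.sum_congr rfl fun B _ => ?_
    rw [Finset.prod_const, Finset.prod_const, Finset.card_sdiff_of_subset (Finset.subset_univ B),
      Finset.card_univ, Fintype.card_fin]
  rw [h1, ← Finset.prod_add]
  have : p + (1 - p) = 1 := by ring
  rw [this]
  simp

lemma sum_w_ne (p : ℝ) (N : ℕ) :
    ∑ B : Finset (Fin N), (if B.Nonempty then p ^ B.card * (1 - p) ^ (N - B.card) else 0)
      = 1 - (1 - p) ^ N := by
  classical
  have h : ∀ B : Finset (Fin N),
      (if B.Nonempty then p ^ B.card * (1 - p) ^ (N - B.card) else 0)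
        = p ^ B.card * (1 - p) ^ (N - B.card)
          - (if B = ∅ then p ^ B.card * (1 - p) ^ (N - B.card) else 0) := by
    intro B
    by_cases hB : B = ∅
    · subst hB; simp
    · rw [if_pos (Finset.nonempty_iff_ne_empty.2 hB), if_neg hB]; ring
  rw [Finset.sum_congr rfl fun B _ => h B, Finset.sum_sub_distrib, sum_w,
    Finset.sum_ite_eq' Finset.univ (∅ : Finset (Fin N))]
  simp

def sumFinsetEquiv (α β : Type*) : Finset α × Finset β ≃ Finset (α ⊕ β) where
  toFun AB := AB.1.disjSum AB.2
  invFun u := (u.toLeft, u.toRight)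
  left_inv := by rintro ⟨A, B⟩; simp
  right_inv := fun u => Finset.toLeft_disjSum_toRight

def edgeEquiv {N M mm : ℕ} (h : N + M = mm) : Fin N ⊕ Fin M ≃ Fin mm :=
  finSumFinEquiv.trans (finCongr h)

def pairEquiv {N M mm : ℕ} (h : N + M = mm) :
    Finset (Fin N) × Finset (Fin M) ≃ Finset (Fin mm) :=
  (sumFinsetEquiv _ _).trans (Equiv.finsetCongr (edgeEquiv h))

lemma pairEquiv_card {N M mm : ℕ} (h : N + M = mm) (A : Finset (Fin N)) (B : Finset (Fin M)) :
    (pairEquiv h (A, B)).card = A.card + B.card := by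
  simp [pairEquiv, sumFinsetEquiv, Equiv.finsetCongr_apply, Finset.card_map,
    Finset.card_disjSum]

lemma edgeEquiv_inl_val {N M mm : ℕ} (h : N + M = mm) (a : Fin N) :
    (edgeEquiv h (Sum.inl a)).val = a.val := by
  simp [edgeEquiv]

lemma edgeEquiv_inr_val {N M mm : ℕ} (h : N + M = mm) (b : Fin M) :
    (edgeEquiv h (Sum.inr b)).val = N + b.val := by
  simp [edgeEquiv]

lemma pos_inl (hN : n - 1 + (m - (n - 1)) = m) (a : Fin (n - 1)) :
    pos n k (edgeEquiv hN (Sum.inl a)) = a.val := by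
  unfold pos
  rw [edgeEquiv_inl_val]
  exact if_pos a.isLt

lemma pos_inr (hN : n - 1 + (m - (n - 1)) = m) (b : Fin (m - (n - 1))) :
    pos n k (edgeEquiv hN (Sum.inr b)) = k := by
  unfold pos
  rw [edgeEquiv_inr_val]
  exact if_neg (by omega)

lemma occ_pair (hN : n - 1 + (m - (n - 1)) = m)
    (A : Finset (Fin (n - 1))) (B : Finset (Fin (m - (n - 1)))) (j : ℕ) (hj : j < n - 1) :
    occ n k (pairEquiv hN (A, B)) j ↔
      ((⟨j, hj⟩ : Fin (n - 1)) ∈ A ∨ (j = k ∧ B.Nonempty)) := by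
  unfold occ
  constructor
  · rintro ⟨e, he, hpe⟩
    have he' : e ∈ (A.disjSum B).map (edgeEquiv hN).toEmbedding := he
    rw [Finset.mem_map] at he'
    obtain ⟨x, hx, rfl⟩ := he'
    simp only [Equiv.coe_toEmbedding] at hpe
    rcases Finset.mem_disjSum.1 hx with ⟨a, ha, rfl⟩ | ⟨b, hb, rfl⟩
    · left
      have : pos n k (edgeEquiv hN (Sum.inl a)) = a.val := pos_inl hN a
      have haj : a.val = j := by rw [← this]; exact hpe
      have : (⟨j, hj⟩ : Fin (n - 1)) = a := by exact Fin.ext haj.symm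
      rwa [this]
    · right
      have : pos n k (edgeEquiv hN (Sum.inr b)) = k := pos_inr hN b
      exact ⟨by rw [← hpe]; exact this, ⟨b, hb⟩⟩
  · rintro (ha | ⟨rfl, b, hb⟩)
    · refine ⟨edgeEquiv hN (Sum.inl ⟨j, hj⟩), ?_, ?_⟩
      · exact Finset.mem_map_of_mem _ (Finset.inl_mem_disjSum.2 ha)
      · exact pos_inl hN _
    · refine ⟨edgeEquiv hN (Sum.inr b), ?_, ?_⟩
      · exact Finset.mem_map_of_mem _ (Finset.inr_mem_disjSum.2 hb)
      · exact pos_inr hN b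

end SRel13
namespace SRel13

open Finset

variable {n m k : ℕ}

/-- the set of unoccupied positions -/
noncomputable def U (hk : k < n - 1) (A : Finset (Fin (n - 1)))
    (B : Finset (Fin (m - (n - 1)))) : Finset (Fin (n - 1)) :=
  if B.Nonempty then Aᶜ.erase ⟨k, hk⟩ else Aᶜ

lemma mem_U (hk : k < n - 1) (A : Finset (Fin (n - 1))) (B : Finset (Fin (m - (n - 1))))
    (x : Fin (n - 1)) :
    x ∈ U hk A B ↔ (x ∉ A ∧ (x.val = k → ¬ B.Nonempty)) := by
  unfold U
  rcases em B.Nonempty with hB | hB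
  on_goal 1 => rw [if_pos hB]
  on_goal 2 => rw [if_neg hB]
  · simp only [Finset.mem_erase, Finset.mem_compl]
    constructor
    · rintro ⟨h1, h2⟩
      refine ⟨h2, fun hv _ => h1 (Fin.ext hv)⟩
    · rintro ⟨h1, h2⟩
      exact ⟨fun hc => h2 (congrArg Fin.val hc) hB, h1⟩
  · simp only [Finset.mem_compl]
    exact ⟨fun h => ⟨h, fun _ => hB⟩, fun h => h.1⟩

lemma compl_eq_singleton {γ : Type*} [Fintype γ] [DecidableEq γ] (A : Finset γ) (x : γ) :
    Aᶜ = {x} ↔ A = Finset.univ.erase x := by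
  rw [compl_eq_comm, Finset.compl_singleton, eq_comm]

lemma split_pair (hn : 3 ≤ n) (hm : n ≤ m) (hk : k < n - 1)
    (hN : n - 1 + (m - (n - 1)) = m)
    (A : Finset (Fin (n - 1))) (B : Finset (Fin (m - (n - 1)))) :
    (Multigraph.Gnm n m k hk).SplitState (⟨0, by omega⟩ : Fin n) (⟨n - 1, by omega⟩ : Fin n)
        (pairEquiv hN (A, B)) ↔
      ∃ l : Fin (n - 1), U hk A B = {l} := by
  rw [splitState_iff hn hm hk]
  constructor
  · rintro ⟨l, hl, hlo, huniq⟩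
    refine ⟨⟨l, hl⟩, ?_⟩
    rw [Finset.eq_singleton_iff_unique_mem]
    constructor
    · rw [mem_U]
      rw [occ_pair hN A B l hl] at hlo
      push_neg at hlo
      exact ⟨hlo.1, fun hv => Finset.not_nonempty_iff_eq_empty.2 (hlo.2 hv)⟩
    · intro x hx
      rw [mem_U] at hx
      have hxo : ¬ occ n k (pairEquiv hN (A, B)) x.val := by
        rw [occ_pair hN A B x.val x.isLt]
        push_neg
        exact ⟨by simpa using hx.1, fun hv => Finset.not_nonempty_iff_eq_empty.1 (hx.2 hv)⟩
      exact Fin.ext (huniq x.val x.isLt hxo)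
  · rintro ⟨l, hU⟩
    have hlU : l ∈ U hk A B := hU ▸ Finset.mem_singleton_self l
    rw [mem_U] at hlU
    refine ⟨l.val, l.isLt, ?_, ?_⟩
    · rw [occ_pair hN A B l.val l.isLt]
      push_neg
      exact ⟨by simpa using hlU.1, fun hv => Finset.not_nonempty_iff_eq_empty.1 (hlU.2 hv)⟩
    · intro l' hl' ho
      rw [occ_pair hN A B l' hl'] at ho
      push_neg at ho
      have : (⟨l', hl'⟩ : Fin (n - 1)) ∈ U hk A B := by
        rw [mem_U]
        exact ⟨ho.1, fun hv => Finset.not_nonempty_iff_eq_empty.2 (ho.2 hv)⟩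
      rw [hU, Finset.mem_singleton] at this
      exact congrArg Fin.val this

lemma U_eq_singleton_k (hk : k < n - 1) (A : Finset (Fin (n - 1)))
    (B : Finset (Fin (m - (n - 1)))) :
    U hk A B = {(⟨k, hk⟩ : Fin (n - 1))} ↔
      (A = Finset.univ.erase ⟨k, hk⟩ ∧ B = ∅) := by
  unfold U
  rcases em B.Nonempty with hB | hB
  on_goal 1 => rw [if_pos hB]
  on_goal 2 => rw [if_neg hB]
  · constructor
    · intro h
      have : (⟨k, hk⟩ : Fin (n - 1)) ∈ Aᶜ.erase ⟨k, hk⟩ := h ▸ Finset.mem_singleton_self _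
      exact absurd (Finset.mem_erase.1 this).1 (by simp)
    · rintro ⟨-, rfl⟩
      exact absurd hB (by simp)
  · rw [compl_eq_singleton]
    have : B = ∅ := Finset.not_nonempty_iff_eq_empty.1 hB
    tauto

lemma U_eq_singleton_ne (hk : k < n - 1) (l : Fin (n - 1)) (hlk : l ≠ ⟨k, hk⟩)
    (A : Finset (Fin (n - 1))) (B : Finset (Fin (m - (n - 1)))) :
    U hk A B = {l} ↔
      (A = Finset.univ.erase l ∨
        (A = (Finset.univ.erase l).erase ⟨k, hk⟩ ∧ B.Nonempty)) := by
  have hcompl2 : ((Finset.univ.erase l).erase (⟨k, hk⟩ : Fin (n - 1)))ᶜ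
      = insert (⟨k, hk⟩ : Fin (n - 1)) {l} := by
    ext x
    simp only [Finset.mem_compl, Finset.mem_erase, Finset.mem_insert, Finset.mem_singleton,
      Finset.mem_univ, and_true]
    tauto
  have hκl : (⟨k, hk⟩ : Fin (n - 1)) ∉ ({l} : Finset (Fin (n - 1))) := by
    simp only [Finset.mem_singleton]
    exact fun hc => hlk hc.symm
  unfold U
  rcases em B.Nonempty with hB | hB
  on_goal 1 => rw [if_pos hB]
  on_goal 2 => rw [if_neg hB]
  · constructor
    · intro h
      by_cases hκ : (⟨k, hk⟩ : Fin (n - 1)) ∈ Aᶜ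
      · right
        refine ⟨?_, hB⟩
        have h2 : Aᶜ = insert (⟨k, hk⟩ : Fin (n - 1)) {l} := by
          rw [← Finset.insert_erase hκ, h]
        have hA : A = (insert (⟨k, hk⟩ : Fin (n - 1)) ({l} : Finset (Fin (n - 1))))ᶜ := by
          rw [← h2, compl_compl]
        rw [hA, ← hcompl2, compl_compl]
      · left
        rw [Finset.erase_eq_of_notMem hκ] at h
        rwa [compl_eq_singleton] at h
    · rintro (rfl | ⟨rfl, -⟩)
      · rw [(compl_eq_singleton _ l).2 rfl]
        exact Finset.erase_eq_of_notMem hκl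
      · rw [hcompl2]
        exact Finset.erase_insert hκl
  · rw [compl_eq_singleton]
    constructor
    · intro h; exact Or.inl h
    · rintro (h | ⟨-, hBn⟩)
      · exact h
      · exact absurd hBn hB

end SRel13
namespace SRel13

open Finset

variable {n m k : ℕ}

lemma sum_pair_A (p : ℝ) {N M : ℕ} (A₀ : Finset (Fin N)) :
    ∑ A : Finset (Fin N), ∑ B : Finset (Fin M),
      (if A = A₀ then
        (p ^ A.card * (1 - p) ^ (N - A.card)) * (p ^ B.card * (1 - p) ^ (M - B.card)) else 0)
    = p ^ A₀.card * (1 - p) ^ (N - A₀.card) := by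
  classical
  have inner : ∀ A : Finset (Fin N),
      (∑ B : Finset (Fin M), if A = A₀ then
        (p ^ A.card * (1 - p) ^ (N - A.card)) * (p ^ B.card * (1 - p) ^ (M - B.card)) else 0)
      = (if A = A₀ then p ^ A.card * (1 - p) ^ (N - A.card) else 0) := by
    intro A
    by_cases h : A = A₀
    · simp only [if_pos h, ← Finset.mul_sum, sum_w, mul_one]
    · simp [h]
  rw [Finset.sum_congr rfl fun A _ => inner A, Finset.sum_ite_eq' Finset.univ A₀,
    if_pos (Finset.mem_univ A₀)]

lemma sum_pair_A_ne (p : ℝ) {N M : ℕ} (A₀ : Finset (Fin N)) :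
    ∑ A : Finset (Fin N), ∑ B : Finset (Fin M),
      (if A = A₀ ∧ B.Nonempty then
        (p ^ A.card * (1 - p) ^ (N - A.card)) * (p ^ B.card * (1 - p) ^ (M - B.card)) else 0)
    = (p ^ A₀.card * (1 - p) ^ (N - A₀.card)) * (1 - (1 - p) ^ M) := by
  classical
  have inner : ∀ A : Finset (Fin N),
      (∑ B : Finset (Fin M), if A = A₀ ∧ B.Nonempty then
        (p ^ A.card * (1 - p) ^ (N - A.card)) * (p ^ B.card * (1 - p) ^ (M - B.card)) else 0)
      = (if A = A₀ then
          (p ^ A.card * (1 - p) ^ (N - A.card)) * (1 - (1 - p) ^ M) else 0) := by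
    intro A
    by_cases h : A = A₀
    · simp only [if_pos h, h, true_and]
      have step : ∀ B : Finset (Fin M),
          (if B.Nonempty then
            (p ^ A₀.card * (1 - p) ^ (N - A₀.card)) * (p ^ B.card * (1 - p) ^ (M - B.card)) else 0)
          = (p ^ A₀.card * (1 - p) ^ (N - A₀.card)) *
              (if B.Nonempty then (p ^ B.card * (1 - p) ^ (M - B.card)) else 0) := by
        intro B; split <;> simp
      rw [Finset.sum_congr rfl fun B _ => step B, ← Finset.mul_sum, sum_w_ne]
      simp
    · simp [h]
  rw [Finset.sum_congr rfl fun A _ => inner A, Finset.sum_ite_eq' Finset.univ A₀,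
    if_pos (Finset.mem_univ A₀)]

lemma sum_pair_AB_empty (p : ℝ) {N M : ℕ} (A₀ : Finset (Fin N)) :
    ∑ A : Finset (Fin N), ∑ B : Finset (Fin M),
      (if A = A₀ ∧ B = ∅ then
        (p ^ A.card * (1 - p) ^ (N - A.card)) * (p ^ B.card * (1 - p) ^ (M - B.card)) else 0)
    = (p ^ A₀.card * (1 - p) ^ (N - A₀.card)) * (1 - p) ^ M := by
  classical
  have inner : ∀ A : Finset (Fin N),
      (∑ B : Finset (Fin M), if A = A₀ ∧ B = ∅ then
        (p ^ A.card * (1 - p) ^ (N - A.card)) * (p ^ B.card * (1 - p) ^ (M - B.card)) else 0)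
      = (if A = A₀ then
          (p ^ A.card * (1 - p) ^ (N - A.card)) * (1 - p) ^ M else 0) := by
    intro A
    by_cases h : A = A₀
    · simp only [if_pos h, h, true_and]
      rw [Finset.sum_ite_eq' Finset.univ (∅ : Finset (Fin M)), if_pos (Finset.mem_univ _)]
      simp
    · simp [h]
  rw [Finset.sum_congr rfl fun A _ => inner A, Finset.sum_ite_eq' Finset.univ A₀,
    if_pos (Finset.mem_univ A₀)]

lemma ite_or_disjoint {P Q : Prop} [Decidable P] [Decidable Q] (h : ¬ (P ∧ Q)) (x : ℝ) :
    (if P ∨ Q then x else 0) = (if P then x else 0) + (if Q then x else 0) := by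
  by_cases hP : P <;> by_cases hQ : Q <;> simp [hP, hQ] <;> exact absurd ⟨hP, hQ⟩ h

end SRel13
/-- For `m ≥ n ≥ 3` and any placement `k` of the bundle,
`sRel(G_{n,m},s,t;p) = (n-2)(1-p)p^{n-3}(1-(1-p)^{m-n+2}) + (1-p)^{m-n+2}p^{n-2}`;
in particular the split reliability does not depend on `k`. -/
theorem sRel_Gnm (n m : ℕ) (hn : 3 ≤ n) (hm : n ≤ m) (k : ℕ) (hk : k < n - 1) :
    ∀ p : ℝ, 0 ≤ p → p ≤ 1 →
      (Multigraph.Gnm n m k hk).sRel (⟨0, by omega⟩ : Fin n) (⟨n - 1, by omega⟩ : Fin n) p =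
        ((n - 2 : ℕ) : ℝ) * (1 - p) * p ^ (n - 3) * (1 - (1 - p) ^ (m - n + 2)) +
          (1 - p) ^ (m - n + 2) * p ^ (n - 2) := by
  intro p hp0 hp1
  classical
  have hN : (n - 1) + (m - (n - 1)) = m := by omega
  -- Step 1: sRel as an explicit sum over `Finset (Fin m)`
  have h0 : (Multigraph.Gnm n m k hk).sRel ⟨0, by omega⟩ ⟨n - 1, by omega⟩ p
      = ∑ E' : Finset (Fin m),
          (if (Multigraph.Gnm n m k hk).SplitState (⟨0, by omega⟩ : Fin n)
              (⟨n - 1, by omega⟩ : Fin n) E'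
            then p ^ E'.card * (1 - p) ^ (m - E'.card) else 0) := by
    unfold Multigraph.sRel
    have hc : Fintype.card (Multigraph.Gnm n m k hk).E = m := Fintype.card_fin m
    rw [hc]
    rfl
  rw [h0, ← Equiv.sum_comp (SRel13.pairEquiv hN)
    (fun E' => if (Multigraph.Gnm n m k hk).SplitState (⟨0, by omega⟩ : Fin n)
        (⟨n - 1, by omega⟩ : Fin n) E' then p ^ E'.card * (1 - p) ^ (m - E'.card) else 0)]
  -- Step 2: rewrite each summand as a sum over the unique unoccupied position
  have h1 : ∀ AB : Finset (Fin (n - 1)) × Finset (Fin (m - (n - 1))),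
      (if (Multigraph.Gnm n m k hk).SplitState (⟨0, by omega⟩ : Fin n)
          (⟨n - 1, by omega⟩ : Fin n) (SRel13.pairEquiv hN AB)
        then p ^ (SRel13.pairEquiv hN AB).card * (1 - p) ^ (m - (SRel13.pairEquiv hN AB).card)
        else 0)
      = ∑ l : Fin (n - 1),
          (if SRel13.U hk AB.1 AB.2 = {l} then
            (p ^ AB.1.card * (1 - p) ^ ((n - 1) - AB.1.card)) *
              (p ^ AB.2.card * (1 - p) ^ ((m - (n - 1)) - AB.2.card)) else 0) := by
    rintro ⟨A, B⟩
    have hw : p ^ (SRel13.pairEquiv hN (A, B)).card *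
          (1 - p) ^ (m - (SRel13.pairEquiv hN (A, B)).card)
        = (p ^ A.card * (1 - p) ^ ((n - 1) - A.card)) *
            (p ^ B.card * (1 - p) ^ ((m - (n - 1)) - B.card)) := by
      rw [SRel13.pairEquiv_card]
      have hA : A.card ≤ n - 1 := by
        simpa using Finset.card_le_univ A
      have hB : B.card ≤ m - (n - 1) := by
        simpa using Finset.card_le_univ B
      have he : m - (A.card + B.card) = ((n - 1) - A.card) + ((m - (n - 1)) - B.card) := by
        omega
      rw [he, pow_add, pow_add]
      ring
    rw [SRel13.split_pair hn hm hk hN A B]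
    by_cases hcond : ∃ l : Fin (n - 1), SRel13.U hk A B = {l}
    · rw [if_pos hcond, hw]
      obtain ⟨l, hl⟩ := hcond
      rw [Finset.sum_congr rfl fun l' _ =>
        if_congr (by rw [hl, Finset.singleton_inj] : (SRel13.U hk A B = {l'}) ↔ l = l') rfl rfl,
        Fintype.sum_ite_eq l]
    · rw [if_neg hcond]
      symm
      apply Finset.sum_eq_zero
      intro l _
      exact if_neg fun hc => hcond ⟨l, hc⟩
  rw [Finset.sum_congr rfl fun AB _ => h1 AB, Finset.sum_comm]
  have h2 : ∀ l : Fin (n - 1),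
      (∑ AB : Finset (Fin (n - 1)) × Finset (Fin (m - (n - 1))),
        (if SRel13.U hk AB.1 AB.2 = {l} then
          (p ^ AB.1.card * (1 - p) ^ ((n - 1) - AB.1.card)) *
            (p ^ AB.2.card * (1 - p) ^ ((m - (n - 1)) - AB.2.card)) else 0))
      = ∑ A : Finset (Fin (n - 1)), ∑ B : Finset (Fin (m - (n - 1))),
          (if SRel13.U hk A B = {l} then
            (p ^ A.card * (1 - p) ^ ((n - 1) - A.card)) *
              (p ^ B.card * (1 - p) ^ ((m - (n - 1)) - B.card)) else 0) :=
    fun l => Fintype.sum_prod_type _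
  rw [Finset.sum_congr rfl fun l _ => h2 l]
  -- Step 3: evaluate the inner double sums
  have hone : n - 1 - (n - 2) = 1 := by omega
  have htwo : n - 1 - (n - 3) = 2 := by omega
  have hcard1 : ∀ l : Fin (n - 1), ((Finset.univ : Finset (Fin (n - 1))).erase l).card = n - 2 := by
    intro l
    rw [Finset.card_erase_of_mem (Finset.mem_univ _), Finset.card_univ, Fintype.card_fin]
    omega
  have hcard2 : ∀ l : Fin (n - 1), l ≠ ⟨k, hk⟩ →
      (((Finset.univ : Finset (Fin (n - 1))).erase l).erase ⟨k, hk⟩).card = n - 3 := by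
    intro l hl
    rw [Finset.card_erase_of_mem (Finset.mem_erase.2 ⟨hl.symm, Finset.mem_univ _⟩)]
    rw [hcard1 l]
    omega
  have hFκ : (∑ A : Finset (Fin (n - 1)), ∑ B : Finset (Fin (m - (n - 1))),
        (if SRel13.U hk A B = {(⟨k, hk⟩ : Fin (n - 1))} then
          (p ^ A.card * (1 - p) ^ ((n - 1) - A.card)) *
            (p ^ B.card * (1 - p) ^ ((m - (n - 1)) - B.card)) else 0))
      = (p ^ (n - 2) * (1 - p) ^ 1) * (1 - p) ^ (m - (n - 1)) := by
    rw [Finset.sum_congr rfl fun A _ => Finset.sum_congr rfl fun B _ =>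
      if_congr (SRel13.U_eq_singleton_k hk A B) rfl rfl]
    rw [SRel13.sum_pair_AB_empty p (Finset.univ.erase ⟨k, hk⟩), hcard1, hone]
  have hFne : ∀ l : Fin (n - 1), l ≠ ⟨k, hk⟩ →
      (∑ A : Finset (Fin (n - 1)), ∑ B : Finset (Fin (m - (n - 1))),
        (if SRel13.U hk A B = {l} then
          (p ^ A.card * (1 - p) ^ ((n - 1) - A.card)) *
            (p ^ B.card * (1 - p) ^ ((m - (n - 1)) - B.card)) else 0))
      = (p ^ (n - 2) * (1 - p) ^ 1)
          + (p ^ (n - 3) * (1 - p) ^ 2) * (1 - (1 - p) ^ (m - (n - 1))) := by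
    intro l hl
    have hdis : ∀ (A : Finset (Fin (n - 1))) (B : Finset (Fin (m - (n - 1)))),
        ¬ ((A = Finset.univ.erase l) ∧
            (A = (Finset.univ.erase l).erase ⟨k, hk⟩ ∧ B.Nonempty)) := by
      rintro A B ⟨h1, h2, -⟩
      have hκ1 : (⟨k, hk⟩ : Fin (n - 1)) ∈ A := by
        rw [h1]; exact Finset.mem_erase.2 ⟨fun hc => hl hc.symm, Finset.mem_univ _⟩
      have hκ2 : (⟨k, hk⟩ : Fin (n - 1)) ∉ A := by
        rw [h2]; exact Finset.notMem_erase _ _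
      exact hκ2 hκ1
    rw [Finset.sum_congr rfl fun A _ => Finset.sum_congr rfl fun B _ =>
      if_congr (SRel13.U_eq_singleton_ne hk l hl A B) rfl rfl]
    rw [Finset.sum_congr rfl fun A _ => Finset.sum_congr rfl fun B _ =>
      SRel13.ite_or_disjoint (hdis A B) _]
    rw [Finset.sum_congr rfl fun A _ => Finset.sum_add_distrib, Finset.sum_add_distrib]
    rw [SRel13.sum_pair_A p (Finset.univ.erase l),
      SRel13.sum_pair_A_ne p ((Finset.univ.erase l).erase ⟨k, hk⟩)]
    rw [hcard1 l, hcard2 l hl, hone, htwo]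
  rw [← Finset.add_sum_erase Finset.univ _ (Finset.mem_univ (⟨k, hk⟩ : Fin (n - 1)))]
  rw [hFκ, Finset.sum_congr rfl fun l hl => hFne l (Finset.mem_erase.1 hl).1]
  rw [Finset.sum_const, hcard1, nsmul_eq_mul]
  -- Step 4: algebra
  have e1 : n - 2 = (n - 3) + 1 := by omega
  have e2 : m - n + 2 = (m - (n - 1)) + 1 := by omega
  rw [e1, e2]
  simp only [pow_succ, pow_zero, pow_one, one_mul]
  ring
end
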